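/- arXiv:1705.00984 — 2 statements merged into one kernel-verified Lean document; each statement's English description precedes it below -/
import Mathlib

section
/- McNaughton's closure theorem for parenthesis languages (union and intersection): if L₁ and L₂ are languages generated by parenthesis grammars over the same terminal alphabet Σ ∪ {[, ]}, then L₁ ∪ L₂ and L₁ ∩ L₂ are also generated by parenthesis grammars over Σ ∪ {[, ]}. -/
open ContextFreeGrammar

namespace PGAux

universe uT uN
variable {T : Type uT}

lemma rewrites_nonterminal_mem {N : Type uN} {r : ContextFreeRule T N}
    {u v : List (Symbol T N)} (h : r.Rewrites u v) : Symbol.nonterminal r.input ∈ u := by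
  obtain ⟨p, q, rfl, rfl⟩ := h.exists_parts; simp

lemma derives_of_forall_terminal {g : ContextFreeGrammar.{uT} T} {u v : List (Symbol T g.NT)}
    (hu : ∀ s ∈ u, ∃ t, s = Symbol.terminal t) (h : g.Derives u v) : v = u := by
  rcases h.eq_or_head with rfl | ⟨z, ⟨r, _, hr⟩, _⟩
  · rfl
  · obtain ⟨t, ht⟩ := hu _ (rewrites_nonterminal_mem hr)
    exact absurd ht (by simp)

lemma derives_append_split {g : ContextFreeGrammar.{uT} T} :
    ∀ {x w : List (Symbol T g.NT)}, g.Derives x w → ∀ u v, x = u ++ v →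
    ∃ w₁ w₂, w = w₁ ++ w₂ ∧ g.Derives u w₁ ∧ g.Derives v w₂ := by
  intro x w h
  induction h using Relation.ReflTransGen.head_induction_on with
  | refl => exact fun u v huv => ⟨u, v, huv, by rfl, by rfl⟩
  | head hp _ ih =>
    rintro u v rfl
    obtain ⟨r, hrmem, hr⟩ := hp
    obtain ⟨p, q, hx, hy⟩ := hr.exists_parts
    subst hy
    rw [List.append_assoc] at hx
    rcases List.append_eq_append_iff.mp hx with ⟨a', hp', hv⟩ | ⟨c', hu', hq⟩
    · -- p = u ++ a', v = a' ++ ([nt] ++ q)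
      subst hp'
      obtain ⟨w₁, w₂, rfl, h1, h2⟩ := ih u (a' ++ r.output ++ q) (by simp)
      refine ⟨w₁, w₂, rfl, h1, Produces.trans_derives ⟨r, hrmem, ?_⟩ h2⟩
      rw [hv, ← List.append_assoc]
      exact ContextFreeRule.rewrites_of_exists_parts r a' q
    · -- u = p ++ c', [nt] ++ q = c' ++ v
      subst hu'
      rcases c' with _ | ⟨s, c''⟩
      · simp only [List.nil_append] at hq
        obtain ⟨w₁, w₂, rfl, h1, h2⟩ := ih (p ++ []) (r.output ++ q) (by simp)
        refine ⟨w₁, w₂, rfl, h1, Produces.trans_derives ⟨r, hrmem, ?_⟩ h2⟩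
        rw [← hq]
        simpa using ContextFreeRule.rewrites_of_exists_parts r [] q
      · have hsq : Symbol.nonterminal r.input = s ∧ q = c'' ++ v := by
          constructor
          · exact (List.cons_eq_cons.mp (by simpa using hq)).1
          · exact (List.cons_eq_cons.mp (by simpa using hq)).2
        obtain ⟨hs, rfl⟩ := hsq
        obtain ⟨w₁, w₂, rfl, h1, h2⟩ := ih (p ++ r.output ++ c'') v (by simp)
        refine ⟨w₁, w₂, rfl, Produces.trans_derives ⟨r, hrmem, ?_⟩ h1, h2⟩
        rw [← hs]
        simpa using ContextFreeRule.rewrites_of_exists_parts r p c''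

lemma derives_nonterminal_head {g : ContextFreeGrammar.{uT} T} {A : g.NT}
    {w : List (Symbol T g.NT)} (h : g.Derives [Symbol.nonterminal A] w)
    (hw : ∀ s ∈ w, ∃ t, s = Symbol.terminal t) :
    ∃ r ∈ g.rules, r.input = A ∧ g.Derives r.output w := by
  rcases h.eq_or_head with heq | ⟨z, ⟨r, hrmem, hr⟩, hd⟩
  · obtain ⟨t, ht⟩ := hw _ (heq ▸ List.mem_singleton_self _)
    exact absurd ht (by simp)
  · obtain ⟨p, q, hx, rfl⟩ := hr.exists_parts
    rcases p with _ | ⟨s, p⟩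
    · rcases q with _ | ⟨s', q⟩
      · have hin : r.input = A := by
          simp only [List.append_nil, List.nil_append] at hx
          exact (Symbol.nonterminal.inj (List.cons_eq_cons.mp hx).1).symm
        refine ⟨r, hrmem, hin, by simpa using hd⟩
      · exfalso
        have := congrArg List.length hx
        simp at this
    · exfalso
      have := congrArg List.length hx
      simp at this

lemma derives_join {g : ContextFreeGrammar.{uT} T} {l : List (Symbol T g.NT)}
    {ws : List (List (Symbol T g.NT))}
    (h : List.Forall₂ (fun s u => g.Derives [s] u) l ws) : g.Derives l ws.flatten := by
  induction h with
  | nil => simp only [List.flatten_nil]; rfl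
  | @cons s u l' ws' h _ ih =>
    simp only [List.flatten_cons]
    show g.Derives ([s] ++ l') (u ++ ws'.flatten)
    exact (h.append_right l').trans (ih.append_left u)

lemma derives_to_terminals_split {g : ContextFreeGrammar.{uT} T} :
    ∀ (l : List (Symbol T g.NT)) {v : List T},
    g.Derives l (v.map Symbol.terminal) →
    ∃ ws : List (List T), v = ws.flatten ∧
      List.Forall₂ (fun s u => g.Derives [s] (List.map Symbol.terminal u)) l ws := by
  intro l
  induction l with
  | nil =>
    intro v h
    have := derives_of_forall_terminal (by simp) h
    have hv : v = [] := by simpa using congrArg List.length this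
    exact ⟨[], by simp [hv], by simp⟩
  | cons s l ih =>
    intro v h
    obtain ⟨w₁, w₂, heq, h1, h2⟩ := derives_append_split h [s] l rfl
    obtain ⟨v₁, v₂, rfl, hm1, hm2⟩ := List.map_eq_append_iff.mp heq
    obtain ⟨ws, rfl, hf⟩ := ih (hm2 ▸ h2)
    exact ⟨v₁ :: ws, rfl, List.Forall₂.cons (hm1 ▸ h1) hf⟩

end PGAux

/-- A context-free grammar over the terminal alphabet `α ⊕ Bool` — where `Sum.inl a` is an
ordinary terminal of `Σ = α`, `Sum.inr false` is the open parenthesis `[` and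
`Sum.inr true` is the closed parenthesis `]` — is a *parenthesis grammar* iff every
production has the form `A → [ mid ]` where `mid` contains only nonterminals and ordinary
terminals (no parentheses). -/
def IsParenthesisGrammar {α : Type} (G : ContextFreeGrammar.{0} (α ⊕ Bool)) : Prop :=
  ∀ r ∈ G.rules, ∃ mid : List (Symbol (α ⊕ Bool) G.NT),
    r.output = Symbol.terminal (Sum.inr false) :: mid ++ [Symbol.terminal (Sum.inr true)] ∧
    ∀ s ∈ mid, (∃ A : G.NT, s = Symbol.nonterminal A) ∨ ∃ a : α, s = Symbol.terminal (Sum.inl a)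

namespace PGAux

section Paren
variable {α : Type}

/-- open parenthesis -/
abbrev opn : α ⊕ Bool := Sum.inr false
/-- close parenthesis -/
abbrev cls : α ⊕ Bool := Sum.inr true

def isOp : α ⊕ Bool → Bool | .inr false => true | _ => false
def isCl : α ⊕ Bool → Bool | .inr true => true | _ => false

def lo (w : List (α ⊕ Bool)) : ℕ := w.countP isOp
def hi (w : List (α ⊕ Bool)) : ℕ := w.countP isCl

@[simp] lemma lo_nil : lo ([] : List (α ⊕ Bool)) = 0 := rfl
@[simp] lemma hi_nil : hi ([] : List (α ⊕ Bool)) = 0 := rfl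
@[simp] lemma lo_append (u v : List (α ⊕ Bool)) : lo (u ++ v) = lo u + lo v :=
  List.countP_append
@[simp] lemma hi_append (u v : List (α ⊕ Bool)) : hi (u ++ v) = hi u + hi v :=
  List.countP_append
@[simp] lemma lo_letter (a : α) : lo [Sum.inl a] = 0 := rfl
@[simp] lemma hi_letter (a : α) : hi [Sum.inl a] = 0 := rfl
@[simp] lemma lo_cons_opn (w : List (α ⊕ Bool)) : lo (opn :: w) = lo w + 1 := by
  simp [lo, List.countP_cons, isOp]
@[simp] lemma hi_cons_opn (w : List (α ⊕ Bool)) : hi (opn :: w) = hi w := by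
  simp [hi, List.countP_cons, isCl]
@[simp] lemma lo_cls : lo ([cls] : List (α ⊕ Bool)) = 0 := rfl
@[simp] lemma hi_cls : hi ([cls] : List (α ⊕ Bool)) = 1 := rfl

def Proper (w : List (α ⊕ Bool)) : Prop :=
  (∃ y, w = opn :: y ++ [cls]) ∧ lo w = hi w ∧
    ∀ p, p <+: w → p ≠ [] → p ≠ w → hi p < lo p

def Block (w : List (α ⊕ Bool)) : Prop := (∃ a, w = [Sum.inl a]) ∨ Proper w

lemma Block.ne_nil {w : List (α ⊕ Bool)} (h : Block w) : w ≠ [] := by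
  rcases h with ⟨a, rfl⟩ | ⟨⟨y, rfl⟩, -, -⟩ <;> simp

lemma Block.lo_eq_hi {w : List (α ⊕ Bool)} (h : Block w) : lo w = hi w := by
  rcases h with ⟨a, rfl⟩ | hp
  · simp
  · exact hp.2.1

lemma proper_prefix_eq {u u' : List (α ⊕ Bool)} (hu : Proper u) (hu' : Proper u')
    (hpre : u <+: u') : u = u' := by
  by_contra hne
  have h1 : hi u < lo u := hu'.2.2 u hpre (by rcases hu.1 with ⟨y, rfl⟩; simp) hne
  have h2 := hu.2.1
  omega

lemma block_eq_of_append {u u' t t' : List (α ⊕ Bool)} (hu : Block u) (hu' : Block u')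
    (h : u ++ t = u' ++ t') : u = u' := by
  rcases hu with ⟨a, rfl⟩ | hp
  · rcases hu' with ⟨a', rfl⟩ | ⟨⟨y', rfl⟩, -, -⟩
    · have hh : a = a' ∧ t = t' := by simpa using h
      rw [hh.1]
    · exact absurd h (by simp)
  · rcases hu' with ⟨a', rfl⟩ | hp'
    · rcases hp.1 with ⟨y, rfl⟩
      exact absurd h (by simp)
    · have pre1 : u <+: u' ++ t' := ⟨t, h⟩
      have pre2 : u' <+: u' ++ t' := List.prefix_append u' t'
      rcases le_total u.length u'.length with hle | hle
      · exact proper_prefix_eq hp hp' (List.prefix_of_prefix_length_le pre1 pre2 hle)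
      · exact (proper_prefix_eq hp' hp (List.prefix_of_prefix_length_le pre2 pre1 hle)).symm

lemma flatten_blocks_inj : ∀ {ws ws' : List (List (α ⊕ Bool))},
    (∀ u ∈ ws, Block u) → (∀ u ∈ ws', Block u) → ws.flatten = ws'.flatten → ws = ws' := by
  intro ws
  induction ws with
  | nil =>
    intro ws' _ h' heq
    rcases ws' with _ | ⟨u', tl'⟩
    · rfl
    · exfalso
      have : u' ++ tl'.flatten = [] := by simpa using heq.symm
      exact (h' u' (List.mem_cons_self)).ne_nil (List.append_eq_nil_iff.mp this).1
  | cons u tl ih =>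
    intro ws' h h' heq
    rcases ws' with _ | ⟨u', tl'⟩
    · exfalso
      have : u ++ tl.flatten = [] := by simpa using heq
      exact (h u (List.mem_cons_self)).ne_nil (List.append_eq_nil_iff.mp this).1
    · simp only [List.flatten_cons] at heq
      have huu : u = u' :=
        block_eq_of_append (h u (List.mem_cons_self)) (h' u' (List.mem_cons_self)) heq
      subst huu
      have htl : tl.flatten = tl'.flatten := by simpa using heq
      rw [ih (fun v hv => h v (List.mem_cons_of_mem _ hv))
        (fun v hv => h' v (List.mem_cons_of_mem _ hv)) htl]

lemma block_prefix_hi_le_lo {u p : List (α ⊕ Bool)} (hu : Block u) (hp : p <+: u) :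
    hi p ≤ lo p := by
  rcases hu with ⟨a, rfl⟩ | hu
  · rcases p with _ | ⟨s, p⟩
    · simp
    · obtain ⟨rfl, hp'⟩ := List.cons_prefix_cons.mp hp
      have : p = [] := List.prefix_nil.mp hp'
      subst this; simp
  · by_cases hnil : p = []
    · subst hnil; simp
    · by_cases heq : p = u
      · subst heq; exact le_of_eq hu.2.1.symm
      · exact le_of_lt (hu.2.2 p hp hnil heq)

lemma hi_le_lo_of_prefix_flatten : ∀ {ws : List (List (α ⊕ Bool))},
    (∀ u ∈ ws, Block u) → ∀ p, p <+: ws.flatten → hi p ≤ lo p := by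
  intro ws
  induction ws with
  | nil =>
    intro _ p hp
    have : p = [] := List.prefix_nil.mp (by simpa using hp)
    subst this; simp
  | cons u tl ih =>
    intro h p hp
    simp only [List.flatten_cons] at hp
    rcases le_total p.length u.length with hle | hle
    · exact block_prefix_hi_le_lo (h u (List.mem_cons_self))
        (List.prefix_of_prefix_length_le hp (List.prefix_append u tl.flatten) hle)
    · have hup : u <+: p :=
        List.prefix_of_prefix_length_le (List.prefix_append u tl.flatten) hp hle
      obtain ⟨q, rfl⟩ := hup
      have hq : q <+: tl.flatten := (List.prefix_append_right_inj u).mp hp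
      have h1 : lo u = hi u := (h u (List.mem_cons_self)).lo_eq_hi
      have h2 : hi q ≤ lo q := ih (fun v hv => h v (List.mem_cons_of_mem _ hv)) q hq
      simp only [lo_append, hi_append]
      omega

lemma flatten_lo_eq_hi {ws : List (List (α ⊕ Bool))} (h : ∀ u ∈ ws, Block u) :
    lo ws.flatten = hi ws.flatten := by
  induction ws with
  | nil => simp
  | cons u tl ih =>
    simp only [List.flatten_cons, lo_append, hi_append]
    rw [(h u (List.mem_cons_self)).lo_eq_hi,
      ih (fun v hv => h v (List.mem_cons_of_mem _ hv))]

lemma proper_wrap {ws : List (List (α ⊕ Bool))} (h : ∀ u ∈ ws, Block u) :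
    Proper (opn :: ws.flatten ++ [cls]) := by
  refine ⟨⟨ws.flatten, rfl⟩, ?_, ?_⟩
  · have := flatten_lo_eq_hi h
    have h1 : lo (opn :: ws.flatten ++ [cls]) = lo ws.flatten + 1 := by
      simp only [List.cons_append, lo_cons_opn, lo_append, lo_cls]
    have h2 : hi (opn :: ws.flatten ++ [cls]) = hi ws.flatten + 1 := by
      simp only [List.cons_append, hi_cons_opn, hi_append, hi_cls]
    omega
  · intro p hp hnil hne
    rcases p with _ | ⟨s, p'⟩
    · exact absurd rfl hnil
    · obtain ⟨rfl, hp'⟩ := List.cons_prefix_cons.mp (by simpa using hp)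
      have key : hi p' ≤ lo p' := by
        rcases le_total p'.length ws.flatten.length with hle | hle
        · exact hi_le_lo_of_prefix_flatten h p'
            (List.prefix_of_prefix_length_le hp' (List.prefix_append _ _) hle)
        · have : ws.flatten <+: p' :=
            List.prefix_of_prefix_length_le (List.prefix_append _ _) hp' hle
          obtain ⟨q, rfl⟩ := this
          have hq : q <+: [cls] := (List.prefix_append_right_inj ws.flatten).mp hp'
          rcases q with _ | ⟨s', q'⟩
          · simpa using le_of_eq (flatten_lo_eq_hi h).symm
          · obtain ⟨rfl, hq'⟩ := List.cons_prefix_cons.mp hq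
            have : q' = [] := List.prefix_nil.mp hq'
            subst this
            exact absurd (by simp) hne
      simp only [lo_cons_opn, hi_cons_opn]
      omega

end Paren
end PGAux

namespace PGAux
section Char
variable {α : Type} {G : ContextFreeGrammar.{0} (α ⊕ Bool)}

/-- Relation between a middle symbol and the word it yields. -/
def SymWord (G : ContextFreeGrammar.{0} (α ⊕ Bool)) (s : Symbol (α ⊕ Bool) G.NT)
    (u : List (α ⊕ Bool)) : Prop :=
  (∃ a : α, s = Symbol.terminal (Sum.inl a) ∧ u = [Sum.inl a]) ∨
  (∃ C : G.NT, s = Symbol.nonterminal C ∧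
    G.Derives [Symbol.nonterminal C] (u.map Symbol.terminal))

lemma forall₂_rel_of_mem_right {β γ : Type*} {R : β → γ → Prop} :
    ∀ {l : List β} {l' : List γ}, List.Forall₂ R l l' → ∀ b ∈ l', ∃ a ∈ l, R a b := by
  intro l l' h
  induction h with
  | nil => simp
  | @cons a b l₁ l₂ hab _ ih =>
    intro c hc
    rcases List.mem_cons.mp hc with rfl | hc
    · exact ⟨a, List.mem_cons_self, hab⟩
    · obtain ⟨a', ha', hr⟩ := ih c hc
      exact ⟨a', List.mem_cons_of_mem _ ha', hr⟩

lemma length_le_flatten {β : Type*} : ∀ {ws : List (List β)} {u : List β}, u ∈ ws →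
    u.length ≤ ws.flatten.length := by
  intro ws
  induction ws with
  | nil => simp
  | cons v tl ih =>
    intro u hu
    rcases List.mem_cons.mp hu with rfl | hu
    · simp
    · have := ih hu
      simp only [List.flatten_cons, List.length_append]
      omega

lemma map_terminal_eq_singleton {u : List (α ⊕ Bool)} {t : α ⊕ Bool}
    (h : u.map (Symbol.terminal (N := G.NT)) = [Symbol.terminal t]) : u = [t] := by
  rcases u with _ | ⟨x, u⟩ <;> simp_all

lemma forall₂_symword : ∀ {mid : List (Symbol (α ⊕ Bool) G.NT)} {ws : List (List (α ⊕ Bool))},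
    List.Forall₂ (fun s u => G.Derives [s] (u.map Symbol.terminal)) mid ws →
    (∀ s ∈ mid, (∃ A : G.NT, s = Symbol.nonterminal A) ∨
      ∃ a : α, s = Symbol.terminal (Sum.inl a)) →
    List.Forall₂ (SymWord G) mid ws := by
  intro mid ws hf
  induction hf with
  | nil => exact fun _ => List.Forall₂.nil
  | @cons s u l' ws' hsu _ ih =>
    intro hmid
    refine List.Forall₂.cons ?_ (ih fun x hx => hmid x (List.mem_cons_of_mem _ hx))
    rcases hmid s (List.mem_cons_self) with ⟨C, rfl⟩ | ⟨a, rfl⟩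
    · exact Or.inr ⟨C, rfl, hsu⟩
    · refine Or.inl ⟨a, rfl, map_terminal_eq_singleton
        (derives_of_forall_terminal (fun x hx => ?_) hsu)⟩
      rcases List.mem_singleton.mp hx with rfl
      exact ⟨Sum.inl a, rfl⟩

lemma pchar_mp (hG : IsParenthesisGrammar G) {A : G.NT} {w : List (α ⊕ Bool)}
    (h : G.Derives [Symbol.nonterminal A] (w.map Symbol.terminal)) :
    ∃ r ∈ G.rules, r.input = A ∧ ∃ mid ws,
      r.output = Symbol.terminal opn :: mid ++ [Symbol.terminal cls] ∧
      w = opn :: ws.flatten ++ [cls] ∧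
      List.Forall₂ (SymWord G) mid ws := by
  obtain ⟨r, hrmem, hin, hd⟩ := derives_nonterminal_head h (fun s hs => by
    obtain ⟨t, -, rfl⟩ := List.mem_map.mp hs; exact ⟨t, rfl⟩)
  obtain ⟨mid, hout, hmid⟩ := hG r hrmem
  rw [hout] at hd
  obtain ⟨w₁, w₂, heq, h1, h2⟩ := derives_append_split hd [Symbol.terminal opn]
    (mid ++ [Symbol.terminal cls]) (by simp)
  obtain ⟨w₂', w₃, heq2, h2', h3⟩ := derives_append_split h2 mid [Symbol.terminal cls] rfl
  have hw₁ : w₁ = [Symbol.terminal opn] := derives_of_forall_terminal (by simp) h1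
  have hw₃ : w₃ = [Symbol.terminal cls] := derives_of_forall_terminal (by simp) h3
  subst hw₁ hw₃ heq2
  -- heq : w.map terminal = [terminal opn] ++ (w₂' ++ [terminal cls])
  obtain ⟨l₁, l₂, rfl, hm1, hm2⟩ := List.map_eq_append_iff.mp heq
  have hl₁ : l₁ = [opn] := map_terminal_eq_singleton hm1
  obtain ⟨m, l₃, rfl, hmm, hm3⟩ := List.map_eq_append_iff.mp hm2
  have hl₃ : l₃ = [cls] := map_terminal_eq_singleton hm3
  subst hl₁ hl₃
  obtain ⟨ws, rfl, hf⟩ := derives_to_terminals_split mid (hmm ▸ h2')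
  exact ⟨r, hrmem, hin, mid, ws, hout, by simp, forall₂_symword hf hmid⟩

end Char
end PGAux

namespace PGAux
section Char2
variable {α : Type} {G : ContextFreeGrammar.{0} (α ⊕ Bool)}

lemma pchar_mpr {A : G.NT} {r : ContextFreeRule (α ⊕ Bool) G.NT} (hrmem : r ∈ G.rules)
    (hin : r.input = A) {mid : List (Symbol (α ⊕ Bool) G.NT)} {ws : List (List (α ⊕ Bool))}
    (hout : r.output = Symbol.terminal opn :: mid ++ [Symbol.terminal cls])
    (hf : List.Forall₂ (SymWord G) mid ws) :
    G.Derives [Symbol.nonterminal A]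
      ((opn :: ws.flatten ++ [cls]).map Symbol.terminal) := by
  have hstep : G.Produces [Symbol.nonterminal A] r.output :=
    ⟨r, hrmem, by rw [← hin]; exact ContextFreeRule.Rewrites.input_output⟩
  refine hstep.trans_derives ?_
  rw [hout]
  have hf' : List.Forall₂ (fun s u => G.Derives [s] u) mid
      (ws.map (List.map Symbol.terminal)) := by
    rw [List.forall₂_map_right_iff]
    refine hf.imp ?_
    rintro s u (⟨a, rfl, rfl⟩ | ⟨C, rfl, hd⟩)
    · simp only [List.map_cons, List.map_nil]
      rfl
    · exact hd
  have hmidder : G.Derives mid ((ws.map (List.map Symbol.terminal)).flatten) :=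
    derives_join hf'
  have hmain := (hmidder.append_left [Symbol.terminal opn]).append_right [Symbol.terminal cls]
  have hflat : (ws.map (List.map Symbol.terminal)).flatten
      = ws.flatten.map (Symbol.terminal (N := G.NT)) :=
    List.map_flatten.symm
  have e2 : (opn :: ws.flatten ++ [cls]).map (Symbol.terminal (N := G.NT))
      = [Symbol.terminal opn] ++ (ws.map (List.map Symbol.terminal)).flatten
          ++ [Symbol.terminal cls] := by
    rw [hflat]; simp
  rw [show (Symbol.terminal opn :: mid ++ [Symbol.terminal cls] :
      List (Symbol (α ⊕ Bool) G.NT)) = [Symbol.terminal opn] ++ mid ++ [Symbol.terminal cls]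
    from by simp, e2]
  exact hmain

lemma derives_proper (hG : IsParenthesisGrammar G) :
    ∀ (w : List (α ⊕ Bool)) (A : G.NT),
      G.Derives [Symbol.nonterminal A] (w.map Symbol.terminal) → Proper w := by
  suffices H : ∀ (n : ℕ) (w : List (α ⊕ Bool)) (A : G.NT), w.length = n →
      G.Derives [Symbol.nonterminal A] (w.map Symbol.terminal) → Proper w from
    fun w A h => H w.length w A rfl h
  intro n
  induction n using Nat.strong_induction_on with
  | _ n ih =>
    intro w A hlen h
    obtain ⟨r, hrmem, hin, mid, ws, hout, hw, hf⟩ := pchar_mp hG h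
    subst hw
    refine proper_wrap ?_
    intro u hu
    obtain ⟨s, -, hrel⟩ := forall₂_rel_of_mem_right hf u hu
    rcases hrel with ⟨a, -, rfl⟩ | ⟨C, -, hder⟩
    · exact Or.inl ⟨a, rfl⟩
    · refine Or.inr (ih u.length ?_ u C rfl hder)
      have h1 : u.length ≤ ws.flatten.length := length_le_flatten hu
      have h2 : (opn :: ws.flatten ++ [cls]).length = ws.flatten.length + 2 := by simp
      omega

end Char2
end PGAux

namespace PGAux
section MapNT
variable {T N₁ N₂ : Type}

def mapSym (f : N₁ → N₂) : Symbol T N₁ → Symbol T N₂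
  | .terminal t => .terminal t
  | .nonterminal n => .nonterminal (f n)

@[simp] lemma mapSym_terminal (f : N₁ → N₂) (t : T) :
    mapSym f (Symbol.terminal t) = Symbol.terminal t := rfl
@[simp] lemma mapSym_nonterminal (f : N₁ → N₂) (n : N₁) :
    mapSym (T := T) f (Symbol.nonterminal n) = Symbol.nonterminal (f n) := rfl

@[simp] lemma mapSym_eq_terminal_iff {f : N₁ → N₂} {s : Symbol T N₁} {t : T} :
    mapSym f s = Symbol.terminal t ↔ s = Symbol.terminal t := by
  cases s <;> simp

@[simp] lemma mapSym_eq_nonterminal_iff {f : N₁ → N₂} {s : Symbol T N₁} {n : N₂} :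
    mapSym f s = Symbol.nonterminal n ↔ ∃ m, s = Symbol.nonterminal m ∧ f m = n := by
  cases s <;> simp

def mapRule (f : N₁ → N₂) (r : ContextFreeRule T N₁) : ContextFreeRule T N₂ :=
  ⟨f r.input, r.output.map (mapSym f)⟩

@[simp] lemma mapRule_input (f : N₁ → N₂) (r : ContextFreeRule T N₁) :
    (mapRule f r).input = f r.input := rfl
@[simp] lemma mapRule_output (f : N₁ → N₂) (r : ContextFreeRule T N₁) :
    (mapRule f r).output = r.output.map (mapSym f) := rfl

lemma rewrites_map (f : N₁ → N₂) {r : ContextFreeRule T N₁} {u v : List (Symbol T N₁)}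
    (h : r.Rewrites u v) :
    (mapRule f r).Rewrites (u.map (mapSym f)) (v.map (mapSym f)) := by
  induction h with
  | head s =>
    simpa [mapRule] using ContextFreeRule.Rewrites.head (r := mapRule f r) (s.map (mapSym f))
  | cons x h ih => exact ContextFreeRule.Rewrites.cons _ ih

lemma map_mapSym_map_terminal (f : N₁ → N₂) (w : List T) :
    (w.map Symbol.terminal).map (mapSym f) = w.map Symbol.terminal := by
  induction w with
  | nil => rfl
  | cons t w ih => simp [ih]

lemma eq_map_terminal_of_map {f : N₁ → N₂} :
    ∀ {v : List (Symbol T N₁)} {w : List T},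
    v.map (mapSym f) = w.map Symbol.terminal → v = w.map Symbol.terminal := by
  intro v
  induction v with
  | nil =>
    intro w h
    cases w
    · rfl
    · simp at h
  | cons s v ih =>
    intro w h
    cases w with
    | nil => simp at h
    | cons t w =>
      simp only [List.map_cons, List.cons_eq_cons] at h ⊢
      obtain ⟨h1, h2⟩ := h
      refine ⟨?_, ih h2⟩
      cases s with
      | terminal t' => simpa using h1
      | nonterminal n => simp [mapSym] at h1

end MapNT

section MapG
variable {T : Type}

lemma derives_map {g₁ g : ContextFreeGrammar.{0} T} (f : g₁.NT → g.NT)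
    (hf : ∀ r ∈ g₁.rules, mapRule f r ∈ g.rules) {u v : List (Symbol T g₁.NT)}
    (h : g₁.Derives u v) :
    g.Derives (u.map (mapSym f)) (v.map (mapSym f)) := by
  induction h with
  | refl => rfl
  | tail _ last ih =>
    obtain ⟨r, hr, hrw⟩ := last
    exact ih.trans_produces ⟨mapRule f r, hf r hr, rewrites_map f hrw⟩

lemma produces_preimage {g₁ g : ContextFreeGrammar.{0} T} (f : g₁.NT → g.NT)
    (hinj : Function.Injective f)
    (hback : ∀ r' ∈ g.rules, (∃ n, r'.input = f n) → ∃ r ∈ g₁.rules, r' = mapRule f r)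
    {u : List (Symbol T g₁.NT)} {v : List (Symbol T g.NT)}
    (h : g.Produces (u.map (mapSym f)) v) :
    ∃ v₀, v = v₀.map (mapSym f) ∧ g₁.Produces u v₀ := by
  obtain ⟨r', hr'mem, hrw⟩ := h
  obtain ⟨p, q, hu, rfl⟩ := hrw.exists_parts
  obtain ⟨u₁, u₂, rfl, hmu₁, hmu₂⟩ := List.map_eq_append_iff.mp hu
  obtain ⟨p₀, l, rfl, hmp₀, hml⟩ := List.map_eq_append_iff.mp hmu₁
  rcases l with _ | ⟨s, l⟩
  · simp at hml
  · rcases l with _ | ⟨s', l⟩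
    · simp only [List.map_cons, List.map_nil, List.cons_eq_cons] at hml
      obtain ⟨hs, -⟩ := hml
      cases s with
      | terminal t => simp at hs
      | nonterminal m =>
        simp only [mapSym_nonterminal, Symbol.nonterminal.injEq] at hs
        obtain ⟨r, hrmem, rfl⟩ := hback _ hr'mem ⟨m, hs.symm⟩
        have hm : m = r.input := hinj (by simpa using hs)
        subst hm
        refine ⟨p₀ ++ r.output ++ u₂, ?_, r, hrmem, ?_⟩
        · simp [hmp₀, hmu₂]
        · have := ContextFreeRule.rewrites_of_exists_parts r p₀ u₂
          simpa using this
    · simp at hml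

lemma derives_preimage {g₁ g : ContextFreeGrammar.{0} T} (f : g₁.NT → g.NT)
    (hinj : Function.Injective f)
    (hback : ∀ r' ∈ g.rules, (∃ n, r'.input = f n) → ∃ r ∈ g₁.rules, r' = mapRule f r)
    {u : List (Symbol T g₁.NT)} {v : List (Symbol T g.NT)}
    (h : g.Derives (u.map (mapSym f)) v) :
    ∃ v₀, v = v₀.map (mapSym f) ∧ g₁.Derives u v₀ := by
  suffices H : ∀ x v, g.Derives x v → ∀ u, x = u.map (mapSym f) →
      ∃ v₀, v = v₀.map (mapSym f) ∧ g₁.Derives u v₀ from H _ _ h u rfl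
  intro x v h
  induction h using Relation.ReflTransGen.head_induction_on with
  | refl => rintro u rfl; exact ⟨u, rfl, by rfl⟩
  | head hp _ ih =>
    rintro u rfl
    obtain ⟨z₀, rfl, hpz⟩ := produces_preimage f hinj hback hp
    obtain ⟨v₀, rfl, hdz⟩ := ih z₀ rfl
    exact ⟨v₀, rfl, hpz.trans_derives hdz⟩

end MapG
end PGAux

namespace PGAux
section Union
variable {α : Type}

open Classical in
noncomputable def unionGrammar (G₁ G₂ : ContextFreeGrammar.{0} (α ⊕ Bool)) :
    ContextFreeGrammar.{0} (α ⊕ Bool) where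
  NT := Option (G₁.NT ⊕ G₂.NT)
  initial := none
  rules :=
    (G₁.rules.image (mapRule (fun n => some (Sum.inl n)))) ∪
    (G₂.rules.image (mapRule (fun n => some (Sum.inr n)))) ∪
    ((G₁.rules.filter (fun r => r.input = G₁.initial)).image
      (fun r => ⟨none, r.output.map (mapSym (fun n => some (Sum.inl n)))⟩)) ∪
    ((G₂.rules.filter (fun r => r.input = G₂.initial)).image
      (fun r => ⟨none, r.output.map (mapSym (fun n => some (Sum.inr n)))⟩))

variable {G₁ G₂ : ContextFreeGrammar.{0} (α ⊕ Bool)}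

lemma paren_output_map (hG : IsParenthesisGrammar G₁) {r : ContextFreeRule (α ⊕ Bool) G₁.NT}
    (hr : r ∈ G₁.rules) {N' : Type} (f : G₁.NT → N') :
    ∃ mid' : List (Symbol (α ⊕ Bool) N'),
      r.output.map (mapSym f) =
        Symbol.terminal (Sum.inr false) :: mid' ++ [Symbol.terminal (Sum.inr true)] ∧
      ∀ s ∈ mid', (∃ A : N', s = Symbol.nonterminal A) ∨ ∃ a : α, s = Symbol.terminal (Sum.inl a) := by
  obtain ⟨mid, hout, hmid⟩ := hG r hr
  refine ⟨mid.map (mapSym f), by simp [hout], ?_⟩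
  intro s hs
  obtain ⟨s₀, hs₀, rfl⟩ := List.mem_map.mp hs
  rcases hmid s₀ hs₀ with ⟨A, rfl⟩ | ⟨a, rfl⟩
  · exact Or.inl ⟨f A, rfl⟩
  · exact Or.inr ⟨a, rfl⟩

open Classical in
lemma unionGrammar_paren (hG₁ : IsParenthesisGrammar G₁) (hG₂ : IsParenthesisGrammar G₂) :
    IsParenthesisGrammar (unionGrammar G₁ G₂) := by
  intro r hr
  obtain ⟨r', hr'⟩ : ∃ r' : ContextFreeRule (α ⊕ Bool) (Option (G₁.NT ⊕ G₂.NT)), r' = r := ⟨r, rfl⟩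
  subst hr'
  change _ ∈ (_ ∪ _ ∪ _ ∪ _ : Finset (ContextFreeRule (α ⊕ Bool) (Option (G₁.NT ⊕ G₂.NT)))) at hr
  simp only [unionGrammar, Finset.mem_union, Finset.mem_image, Finset.mem_filter] at hr
  rcases hr with ((⟨r₀, hr₀, rfl⟩ | ⟨r₀, hr₀, rfl⟩) | ⟨r₀, ⟨hr₀, -⟩, rfl⟩) | ⟨r₀, ⟨hr₀, -⟩, rfl⟩
  · exact paren_output_map hG₁ hr₀ _
  · exact paren_output_map hG₂ hr₀ _
  · exact paren_output_map hG₁ hr₀ _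
  · exact paren_output_map hG₂ hr₀ _

open Classical in
lemma unionGrammar_lang : (unionGrammar G₁ G₂).language = G₁.language ⊔ G₂.language := by
  ext w
  constructor
  · intro h
    rw [mem_language_iff] at h
    obtain ⟨r', hr'mem, hin, hd⟩ := derives_nonterminal_head h (fun s hs => by
      obtain ⟨t, -, rfl⟩ := List.mem_map.mp hs; exact ⟨t, rfl⟩)
    have hr'' := hr'mem
    obtain ⟨r'', hr''e⟩ : ∃ r'' : ContextFreeRule (α ⊕ Bool) (Option (G₁.NT ⊕ G₂.NT)), r'' = r' := ⟨r', rfl⟩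
    subst hr''e
    change _ ∈ (_ ∪ _ ∪ _ ∪ _ : Finset (ContextFreeRule (α ⊕ Bool) (Option (G₁.NT ⊕ G₂.NT)))) at hr''
    simp only [unionGrammar, Finset.mem_union, Finset.mem_image, Finset.mem_filter] at hr''
    rcases hr'' with ((⟨r₀, hr₀, rfl⟩ | ⟨r₀, hr₀, rfl⟩) | ⟨r₀, ⟨hr₀, hini⟩, rfl⟩) |
      ⟨r₀, ⟨hr₀, hini⟩, rfl⟩
    · exact absurd hin (by simp [unionGrammar])
    · exact absurd hin (by simp [unionGrammar])
    · -- G₁ start rule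
      left
      change w ∈ G₁.language
      rw [mem_language_iff]
      have hback : ∀ r' ∈ (unionGrammar G₁ G₂).rules,
          (∃ n, r'.input = (fun n => (some (Sum.inl n) : Option (G₁.NT ⊕ G₂.NT))) n) →
          ∃ r ∈ G₁.rules, r' = mapRule (fun n => some (Sum.inl n)) r := by
        intro r' hr' hn
        obtain ⟨r'', hr''e⟩ : ∃ r'' : ContextFreeRule (α ⊕ Bool) (Option (G₁.NT ⊕ G₂.NT)), r'' = r' := ⟨r', rfl⟩
        subst hr''e
        change _ ∈ (_ ∪ _ ∪ _ ∪ _ : Finset (ContextFreeRule (α ⊕ Bool) (Option (G₁.NT ⊕ G₂.NT)))) at hr'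
        simp only [unionGrammar, Finset.mem_union, Finset.mem_image, Finset.mem_filter] at hr'
        rcases hr' with ((⟨r₀', hr₀', rfl⟩ | ⟨r₀', hr₀', rfl⟩) | ⟨r₀', -, rfl⟩) | ⟨r₀', -, rfl⟩
        · exact ⟨r₀', hr₀', rfl⟩
        · exfalso
          obtain ⟨n, hn⟩ := hn
          rw [mapRule_input] at hn
          exact absurd hn (by intro h; cases h)
        · exfalso
          obtain ⟨n, hn⟩ := hn
          exact absurd hn (by simp)
        · exfalso
          obtain ⟨n, hn⟩ := hn
          exact absurd hn (by simp)
      obtain ⟨v₀, hv₀, hdz⟩ := derives_preimage (g₁ := G₁) (g := unionGrammar G₁ G₂)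
        (fun n => some (Sum.inl n)) ((Option.some_injective _).comp Sum.inl_injective) hback hd
      have hv₀' : v₀ = w.map Symbol.terminal := eq_map_terminal_of_map hv₀.symm
      subst hv₀'
      refine Produces.trans_derives ⟨r₀, hr₀, ?_⟩ hdz
      have := ContextFreeRule.Rewrites.input_output (r := r₀)
      rwa [hini] at this
    · -- G₂ start rule
      right
      change w ∈ G₂.language
      rw [mem_language_iff]
      have hback : ∀ r' ∈ (unionGrammar G₁ G₂).rules,
          (∃ n, r'.input = (fun n => (some (Sum.inr n) : Option (G₁.NT ⊕ G₂.NT))) n) →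
          ∃ r ∈ G₂.rules, r' = mapRule (fun n => some (Sum.inr n)) r := by
        intro r' hr' hn
        obtain ⟨r'', hr''e⟩ : ∃ r'' : ContextFreeRule (α ⊕ Bool) (Option (G₁.NT ⊕ G₂.NT)), r'' = r' := ⟨r', rfl⟩
        subst hr''e
        change _ ∈ (_ ∪ _ ∪ _ ∪ _ : Finset (ContextFreeRule (α ⊕ Bool) (Option (G₁.NT ⊕ G₂.NT)))) at hr'
        simp only [unionGrammar, Finset.mem_union, Finset.mem_image, Finset.mem_filter] at hr'
        rcases hr' with ((⟨r₀', hr₀', rfl⟩ | ⟨r₀', hr₀', rfl⟩) | ⟨r₀', -, rfl⟩) | ⟨r₀', -, rfl⟩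
        · exfalso
          obtain ⟨n, hn⟩ := hn
          rw [mapRule_input] at hn
          exact absurd hn (by intro h; cases h)
        · exact ⟨r₀', hr₀', rfl⟩
        · exfalso
          obtain ⟨n, hn⟩ := hn
          exact absurd hn (by simp)
        · exfalso
          obtain ⟨n, hn⟩ := hn
          exact absurd hn (by simp)
      obtain ⟨v₀, hv₀, hdz⟩ := derives_preimage (g₁ := G₂) (g := unionGrammar G₁ G₂)
        (fun n => some (Sum.inr n)) ((Option.some_injective _).comp Sum.inr_injective) hback hd
      have hv₀' : v₀ = w.map Symbol.terminal := eq_map_terminal_of_map hv₀.symm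
      subst hv₀'
      refine Produces.trans_derives ⟨r₀, hr₀, ?_⟩ hdz
      have := ContextFreeRule.Rewrites.input_output (r := r₀)
      rwa [hini] at this
  · intro h
    rcases h with h | h
    · change w ∈ G₁.language at h
      rw [mem_language_iff] at h ⊢
      obtain ⟨r, hrmem, hin, hd⟩ := derives_nonterminal_head h (fun s hs => by
        obtain ⟨t, -, rfl⟩ := List.mem_map.mp hs; exact ⟨t, rfl⟩)
      have hstep : (unionGrammar G₁ G₂).Produces [Symbol.nonterminal none]
          (r.output.map (mapSym (fun n => some (Sum.inl n)))) := by
        refine ⟨⟨none, r.output.map (mapSym (fun n => some (Sum.inl n)))⟩, ?_,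
          ContextFreeRule.Rewrites.input_output⟩
        change _ ∈ (_ ∪ _ ∪ _ ∪ _ : Finset (ContextFreeRule (α ⊕ Bool) (Option (G₁.NT ⊕ G₂.NT))))
        simp only [unionGrammar, Finset.mem_union, Finset.mem_image, Finset.mem_filter]
        exact Or.inl (Or.inr ⟨r, ⟨hrmem, hin⟩, rfl⟩)
      refine hstep.trans_derives ?_
      have := derives_map (g := unionGrammar G₁ G₂) (fun n => some (Sum.inl n))
        (fun r' hr' => by
          change _ ∈ (_ ∪ _ ∪ _ ∪ _ : Finset (ContextFreeRule (α ⊕ Bool) (Option (G₁.NT ⊕ G₂.NT))))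
          simp only [unionGrammar, Finset.mem_union, Finset.mem_image]
          exact Or.inl (Or.inl (Or.inl ⟨r', hr', rfl⟩))) hd
      exact (map_mapSym_map_terminal _ w) ▸ this
    · change w ∈ G₂.language at h
      rw [mem_language_iff] at h ⊢
      obtain ⟨r, hrmem, hin, hd⟩ := derives_nonterminal_head h (fun s hs => by
        obtain ⟨t, -, rfl⟩ := List.mem_map.mp hs; exact ⟨t, rfl⟩)
      have hstep : (unionGrammar G₁ G₂).Produces [Symbol.nonterminal none]
          (r.output.map (mapSym (fun n => some (Sum.inr n)))) := by
        refine ⟨⟨none, r.output.map (mapSym (fun n => some (Sum.inr n)))⟩, ?_,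
          ContextFreeRule.Rewrites.input_output⟩
        change _ ∈ (_ ∪ _ ∪ _ ∪ _ : Finset (ContextFreeRule (α ⊕ Bool) (Option (G₁.NT ⊕ G₂.NT))))
        simp only [unionGrammar, Finset.mem_union, Finset.mem_image, Finset.mem_filter]
        exact Or.inr ⟨r, ⟨hrmem, hin⟩, rfl⟩
      refine hstep.trans_derives ?_
      have := derives_map (g := unionGrammar G₁ G₂) (fun n => some (Sum.inr n))
        (fun r' hr' => by
          change _ ∈ (_ ∪ _ ∪ _ ∪ _ : Finset (ContextFreeRule (α ⊕ Bool) (Option (G₁.NT ⊕ G₂.NT))))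
          simp only [unionGrammar, Finset.mem_union, Finset.mem_image]
          exact Or.inl (Or.inl (Or.inr ⟨r', hr', rfl⟩))) hd
      exact (map_mapSym_map_terminal _ w) ▸ this

end Union
end PGAux

namespace PGAux
section Inter
variable {α : Type}

open Classical in
noncomputable def combine {N₁ N₂ : Type} :
    List (Symbol (α ⊕ Bool) N₁) → List (Symbol (α ⊕ Bool) N₂) →
    Option (List (Symbol (α ⊕ Bool) (N₁ × N₂)))
  | [], [] => some []
  | Symbol.terminal t₁ :: l₁, Symbol.terminal t₂ :: l₂ =>
      if t₁ = t₂ then (combine l₁ l₂).map (Symbol.terminal t₁ :: ·) else none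
  | Symbol.nonterminal A :: l₁, Symbol.nonterminal B :: l₂ =>
      (combine l₁ l₂).map (Symbol.nonterminal (A, B) :: ·)
  | _, _ => none

variable {N₁ N₂ : Type}

@[simp] lemma combine_nil : combine (α := α) (N₁ := N₁) (N₂ := N₂) [] [] = some [] := by
  simp [combine]

@[simp] lemma combine_nil_cons (s : Symbol (α ⊕ Bool) N₂) (l : List (Symbol (α ⊕ Bool) N₂)) :
    combine (N₁ := N₁) [] (s :: l) = none := by
  simp [combine]

@[simp] lemma combine_cons_nil (s : Symbol (α ⊕ Bool) N₁) (l : List (Symbol (α ⊕ Bool) N₁)) :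
    combine (N₂ := N₂) (s :: l) [] = none := by
  simp [combine]

@[simp] lemma combine_terminal_cons (t : α ⊕ Bool) (l₁ : List (Symbol (α ⊕ Bool) N₁))
    (l₂ : List (Symbol (α ⊕ Bool) N₂)) :
    combine (Symbol.terminal t :: l₁) (Symbol.terminal t :: l₂) =
      (combine l₁ l₂).map (Symbol.terminal t :: ·) := by
  simp [combine]

open Classical in
lemma combine_terminal_cons' {t₁ t₂ : α ⊕ Bool} (l₁ : List (Symbol (α ⊕ Bool) N₁))
    (l₂ : List (Symbol (α ⊕ Bool) N₂)) :
    combine (Symbol.terminal t₁ :: l₁) (Symbol.terminal t₂ :: l₂) =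
      if t₁ = t₂ then (combine l₁ l₂).map (Symbol.terminal t₁ :: ·) else none := by
  simp [combine]

@[simp] lemma combine_nonterminal_cons (A : N₁) (B : N₂) (l₁ : List (Symbol (α ⊕ Bool) N₁))
    (l₂ : List (Symbol (α ⊕ Bool) N₂)) :
    combine (Symbol.nonterminal A :: l₁) (Symbol.nonterminal B :: l₂) =
      (combine l₁ l₂).map (Symbol.nonterminal (A, B) :: ·) := by
  simp [combine]

@[simp] lemma combine_terminal_nonterminal (t : α ⊕ Bool) (B : N₂)
    (l₁ : List (Symbol (α ⊕ Bool) N₁)) (l₂ : List (Symbol (α ⊕ Bool) N₂)) :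
    combine (Symbol.terminal t :: l₁) (Symbol.nonterminal B :: l₂) = none := by
  simp [combine]

@[simp] lemma combine_nonterminal_terminal (A : N₁) (t : α ⊕ Bool)
    (l₁ : List (Symbol (α ⊕ Bool) N₁)) (l₂ : List (Symbol (α ⊕ Bool) N₂)) :
    combine (Symbol.nonterminal A :: l₁) (Symbol.terminal t :: l₂) = none := by
  simp [combine]

lemma combine_proj :
    ∀ {l₁ : List (Symbol (α ⊕ Bool) N₁)} {l₂ : List (Symbol (α ⊕ Bool) N₂)}
      {o : List (Symbol (α ⊕ Bool) (N₁ × N₂))}, combine l₁ l₂ = some o →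
    o.map (mapSym Prod.fst) = l₁ ∧ o.map (mapSym Prod.snd) = l₂ := by
  intro l₁
  induction l₁ with
  | nil =>
    intro l₂ o h
    cases l₂ with
    | nil => simp_all
    | cons s l₂ => simp at h
  | cons s l₁ ih =>
    intro l₂ o h
    cases l₂ with
    | nil => simp at h
    | cons s' l₂ =>
      cases s with
      | terminal t₁ =>
        cases s' with
        | terminal t₂ =>
          rw [combine_terminal_cons'] at h
          split_ifs at h with ht
          subst ht
          obtain ⟨o', ho', rfl⟩ := Option.map_eq_some_iff.mp h
          obtain ⟨h1, h2⟩ := ih ho'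
          simp [h1, h2]
        | nonterminal B => simp at h
      | nonterminal A =>
        cases s' with
        | terminal t₂ => simp at h
        | nonterminal B =>
          obtain ⟨o', ho', rfl⟩ := Option.map_eq_some_iff.mp h
          obtain ⟨h1, h2⟩ := ih ho'
          simp [h1, h2]

lemma combine_append :
    ∀ {a : List (Symbol (α ⊕ Bool) N₁)} {b : List (Symbol (α ⊕ Bool) N₂)}
      {c : List (Symbol (α ⊕ Bool) N₁)} {d : List (Symbol (α ⊕ Bool) N₂)} {o o'},
    combine a b = some o → combine c d = some o' →
    combine (a ++ c) (b ++ d) = some (o ++ o') := by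
  intro a
  induction a with
  | nil =>
    intro b c d o o' h h'
    cases b with
    | nil => simp_all
    | cons s b => simp at h
  | cons s a ih =>
    intro b c d o o' h h'
    cases b with
    | nil => simp at h
    | cons s' b =>
      cases s with
      | terminal t₁ =>
        cases s' with
        | terminal t₂ =>
          rw [combine_terminal_cons'] at h
          split_ifs at h with ht
          subst ht
          obtain ⟨o₀, ho₀, rfl⟩ := Option.map_eq_some_iff.mp h
          simp only [List.cons_append, combine_terminal_cons, ih ho₀ h', Option.map_some]
        | nonterminal B => simp at h
      | nonterminal A =>
        cases s' with
        | terminal t₂ => simp at h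
        | nonterminal B =>
          obtain ⟨o₀, ho₀, rfl⟩ := Option.map_eq_some_iff.mp h
          simp only [List.cons_append, combine_nonterminal_cons, ih ho₀ h', Option.map_some]

end Inter
end PGAux

namespace PGAux
section Inter2
variable {α : Type}

open Classical in
noncomputable def interGrammar (G₁ G₂ : ContextFreeGrammar.{0} (α ⊕ Bool)) :
    ContextFreeGrammar.{0} (α ⊕ Bool) where
  NT := G₁.NT × G₂.NT
  initial := (G₁.initial, G₂.initial)
  rules := (G₁.rules ×ˢ G₂.rules).filterMap
    (fun p => (combine p.1.output p.2.output).map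
      (fun o => ⟨(p.1.input, p.2.input), o⟩))
    (by
      rintro ⟨r₁, r₂⟩ ⟨r₁', r₂'⟩ r h h'
      obtain ⟨o, ho, rfl⟩ := Option.map_eq_some_iff.mp h
      obtain ⟨o', ho', he⟩ := Option.map_eq_some_iff.mp h'
      obtain ⟨hi, rfl⟩ := ContextFreeRule.mk.injEq .. ▸ he
      obtain ⟨p1, p2⟩ := combine_proj ho
      obtain ⟨p1', p2'⟩ := combine_proj ho'
      have hi1 : r₁'.input = r₁.input := (Prod.mk.injEq .. ▸ hi).1
      have hi2 : r₂'.input = r₂.input := (Prod.mk.injEq .. ▸ hi).2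
      have e1 : r₁ = r₁' := ContextFreeRule.ext hi1.symm (p1.symm.trans p1')
      have e2 : r₂ = r₂' := ContextFreeRule.ext hi2.symm (p2.symm.trans p2')
      rw [e1, e2])

variable {G₁ G₂ : ContextFreeGrammar.{0} (α ⊕ Bool)}

lemma mem_interGrammar_rules {r : ContextFreeRule (α ⊕ Bool) (G₁.NT × G₂.NT)} :
    r ∈ (interGrammar G₁ G₂).rules ↔
      ∃ r₁ ∈ G₁.rules, ∃ r₂ ∈ G₂.rules, ∃ o, combine r₁.output r₂.output = some o ∧
        r = ⟨(r₁.input, r₂.input), o⟩ := by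
  simp only [interGrammar]
  change r ∈ Finset.filterMap _ _ _ ↔ _
  rw [Finset.mem_filterMap]
  constructor
  · rintro ⟨⟨r₁, r₂⟩, hmem, hr⟩
    obtain ⟨o, ho, rfl⟩ := Option.map_eq_some_iff.mp hr
    obtain ⟨h1, h2⟩ := Finset.mem_product.mp hmem
    exact ⟨r₁, h1, r₂, h2, o, ho, rfl⟩
  · rintro ⟨r₁, h1, r₂, h2, o, ho, rfl⟩
    exact ⟨⟨r₁, r₂⟩, Finset.mem_product.mpr ⟨h1, h2⟩, by rw [ho]; rfl⟩

lemma shape_reflect {N' : Type} {N₁ : Type} (f : N' → N₁)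
    {o : List (Symbol (α ⊕ Bool) N')} {mid₁ : List (Symbol (α ⊕ Bool) N₁)}
    (h : o.map (mapSym f) = Symbol.terminal (Sum.inr false) :: mid₁
      ++ [Symbol.terminal (Sum.inr true)])
    (hmid : ∀ s ∈ mid₁, (∃ A : N₁, s = Symbol.nonterminal A) ∨
      ∃ a : α, s = Symbol.terminal (Sum.inl a)) :
    ∃ mid : List (Symbol (α ⊕ Bool) N'),
      o = Symbol.terminal (Sum.inr false) :: mid ++ [Symbol.terminal (Sum.inr true)] ∧
      ∀ s ∈ mid, (∃ A : N', s = Symbol.nonterminal A) ∨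
        ∃ a : α, s = Symbol.terminal (Sum.inl a) := by
  rcases o with _ | ⟨s, o'⟩
  · simp at h
  · rw [List.map_cons] at h
    obtain ⟨hs, ho'⟩ := List.cons_eq_cons.mp h
    have hs' : s = Symbol.terminal (Sum.inr false) := mapSym_eq_terminal_iff.mp hs
    subst hs'
    obtain ⟨m₀, l₀, rfl, hm₀, hl₀⟩ := List.map_eq_append_iff.mp ho'
    rcases l₀ with _ | ⟨s', l₀⟩
    · simp at hl₀
    · rcases l₀ with _ | ⟨s'', l₀⟩
      · rw [List.map_cons, List.map_nil] at hl₀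
        have hs'' : s' = Symbol.terminal (Sum.inr true) :=
          mapSym_eq_terminal_iff.mp (List.cons_eq_cons.mp hl₀).1
        subst hs''
        refine ⟨m₀, rfl, ?_⟩
        intro s hs
        have hsm : mapSym f s ∈ mid₁ := hm₀ ▸ List.mem_map_of_mem hs
        rcases hmid _ hsm with ⟨A, hA⟩ | ⟨a, ha⟩
        · obtain ⟨m, rfl, -⟩ := mapSym_eq_nonterminal_iff.mp hA
          exact Or.inl ⟨m, rfl⟩
        · exact Or.inr ⟨a, mapSym_eq_terminal_iff.mp ha⟩
      · exfalso
        have := congrArg List.length hl₀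
        simp at this

lemma interGrammar_paren (hG₁ : IsParenthesisGrammar G₁) :
    IsParenthesisGrammar (interGrammar G₁ G₂) := by
  intro r hr
  obtain ⟨r₁, h1, r₂, h2, o, ho, rfl⟩ := mem_interGrammar_rules.mp hr
  obtain ⟨mid₁, hout₁, hmid₁⟩ := hG₁ r₁ h1
  obtain ⟨mid, hsh, hprops⟩ := shape_reflect Prod.fst ((combine_proj ho).1.trans hout₁) hmid₁
  exact ⟨mid, hsh, hprops⟩

lemma interGrammar_proj_fst :
    ∀ r' ∈ (interGrammar G₁ G₂).rules, mapRule Prod.fst r' ∈ G₁.rules := by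
  intro r' hr'
  obtain ⟨r₁, h1, r₂, h2, o, ho, rfl⟩ := mem_interGrammar_rules.mp hr'
  have : mapRule Prod.fst (⟨(r₁.input, r₂.input), o⟩ :
      ContextFreeRule (α ⊕ Bool) (G₁.NT × G₂.NT)) = r₁ :=
    ContextFreeRule.ext rfl (combine_proj ho).1
  rwa [this]

lemma interGrammar_proj_snd :
    ∀ r' ∈ (interGrammar G₁ G₂).rules, mapRule Prod.snd r' ∈ G₂.rules := by
  intro r' hr'
  obtain ⟨r₁, h1, r₂, h2, o, ho, rfl⟩ := mem_interGrammar_rules.mp hr'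
  have : mapRule Prod.snd (⟨(r₁.input, r₂.input), o⟩ :
      ContextFreeRule (α ⊕ Bool) (G₁.NT × G₂.NT)) = r₂ :=
    ContextFreeRule.ext rfl (combine_proj ho).2
  rwa [this]

end Inter2
end PGAux

namespace PGAux
section Inter3
variable {α : Type} {G₁ G₂ : ContextFreeGrammar.{0} (α ⊕ Bool)}

lemma blocks_of_forall₂ {G : ContextFreeGrammar.{0} (α ⊕ Bool)} (hG : IsParenthesisGrammar G)
    {mid : List (Symbol (α ⊕ Bool) G.NT)} {ws : List (List (α ⊕ Bool))}
    (hf : List.Forall₂ (SymWord G) mid ws) : ∀ u ∈ ws, Block u := by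
  intro u hu
  obtain ⟨s, -, hrel⟩ := forall₂_rel_of_mem_right hf u hu
  rcases hrel with ⟨a, -, rfl⟩ | ⟨C, -, hd⟩
  · exact Or.inl ⟨a, rfl⟩
  · exact Or.inr (derives_proper hG u C hd)

lemma not_proper_letter (a : α) : ¬ Proper ([Sum.inl a] : List (α ⊕ Bool)) := by
  rintro ⟨⟨y, hy⟩, -, -⟩
  rcases y with _ | ⟨z, y⟩ <;> simp at hy

lemma key_build (hG₁ : IsParenthesisGrammar G₁) (hG₂ : IsParenthesisGrammar G₂) :
    ∀ {ws : List (List (α ⊕ Bool))} {mid₁ : List (Symbol (α ⊕ Bool) G₁.NT)}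
      {mid₂ : List (Symbol (α ⊕ Bool) G₂.NT)},
    List.Forall₂ (SymWord G₁) mid₁ ws → List.Forall₂ (SymWord G₂) mid₂ ws →
    (∀ u ∈ ws, ∀ (C : G₁.NT) (D : G₂.NT),
        G₁.Derives [Symbol.nonterminal C] (u.map Symbol.terminal) →
        G₂.Derives [Symbol.nonterminal D] (u.map Symbol.terminal) →
        (interGrammar G₁ G₂).Derives [Symbol.nonterminal (C, D)] (u.map Symbol.terminal)) →
    ∃ mid, combine mid₁ mid₂ = some mid ∧
      List.Forall₂ (SymWord (interGrammar G₁ G₂)) mid ws := by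
  intro ws
  induction ws with
  | nil =>
    intro mid₁ mid₂ h1 h2 _
    have e1 : mid₁ = [] := by cases h1; rfl
    have e2 : mid₂ = [] := by cases h2; rfl
    subst e1; subst e2
    exact ⟨[], combine_nil, List.Forall₂.nil⟩
  | cons u ws ih =>
    intro mid₁ mid₂ h1 h2 hder
    rw [List.forall₂_cons_right_iff] at h1 h2
    obtain ⟨s₁, mid₁', hs₁, h1', rfl⟩ := h1
    obtain ⟨s₂, mid₂', hs₂, h2', rfl⟩ := h2
    obtain ⟨mid', hc, hf'⟩ := ih h1' h2' (fun v hv => hder v (List.mem_cons_of_mem _ hv))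
    rcases hs₁ with ⟨a, rfl, rfl⟩ | ⟨C, rfl, hd₁⟩
    · rcases hs₂ with ⟨a', rfl, heq⟩ | ⟨D, rfl, hd₂⟩
      · have ha : a' = a := by simpa using heq.symm
        refine ⟨Symbol.terminal (Sum.inl a) :: mid', ?_, ?_⟩
        · rw [ha, combine_terminal_cons, hc]
          rfl
        · exact List.Forall₂.cons (Or.inl ⟨a, rfl, rfl⟩) hf'
      · exact absurd (derives_proper hG₂ _ D hd₂) (not_proper_letter a)
    · rcases hs₂ with ⟨a, rfl, rfl⟩ | ⟨D, rfl, hd₂⟩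
      · exact absurd (derives_proper hG₁ _ C hd₁) (not_proper_letter a)
      · refine ⟨Symbol.nonterminal (C, D) :: mid', ?_, ?_⟩
        · rw [combine_nonterminal_cons, hc]
          rfl
        · exact List.Forall₂.cons
            (Or.inr ⟨(C, D), rfl, hder u (List.mem_cons_self) C D hd₁ hd₂⟩) hf'

lemma inter_forward (hG₁ : IsParenthesisGrammar G₁) (hG₂ : IsParenthesisGrammar G₂) :
    ∀ (w : List (α ⊕ Bool)) (A : G₁.NT) (B : G₂.NT),
      G₁.Derives [Symbol.nonterminal A] (w.map Symbol.terminal) →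
      G₂.Derives [Symbol.nonterminal B] (w.map Symbol.terminal) →
      (interGrammar G₁ G₂).Derives [Symbol.nonterminal (A, B)] (w.map Symbol.terminal) := by
  suffices H : ∀ (n : ℕ) (w : List (α ⊕ Bool)) (A : G₁.NT) (B : G₂.NT), w.length = n →
      G₁.Derives [Symbol.nonterminal A] (w.map Symbol.terminal) →
      G₂.Derives [Symbol.nonterminal B] (w.map Symbol.terminal) →
      (interGrammar G₁ G₂).Derives [Symbol.nonterminal (A, B)] (w.map Symbol.terminal) from
    fun w A B h₁ h₂ => H w.length w A B rfl h₁ h₂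
  intro n
  induction n using Nat.strong_induction_on with
  | _ n ih =>
    intro w A B hlen h₁ h₂
    obtain ⟨r₁, hr₁, hin₁, mid₁, ws₁, hout₁, hw₁, hf₁⟩ := pchar_mp hG₁ h₁
    obtain ⟨r₂, hr₂, hin₂, mid₂, ws₂, hout₂, hw₂, hf₂⟩ := pchar_mp hG₂ h₂
    have hws : ws₁ = ws₂ := by
      refine flatten_blocks_inj (blocks_of_forall₂ hG₁ hf₁) (blocks_of_forall₂ hG₂ hf₂) ?_
      have := hw₁ ▸ hw₂
      simpa using this
    subst hws
    have hderiv : ∀ u ∈ ws₁, ∀ (C : G₁.NT) (D : G₂.NT),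
        G₁.Derives [Symbol.nonterminal C] (u.map Symbol.terminal) →
        G₂.Derives [Symbol.nonterminal D] (u.map Symbol.terminal) →
        (interGrammar G₁ G₂).Derives [Symbol.nonterminal (C, D)] (u.map Symbol.terminal) := by
      intro u hu C D d1 d2
      refine ih u.length ?_ u C D rfl d1 d2
      have h1 : u.length ≤ ws₁.flatten.length := length_le_flatten hu
      have h2 : (opn :: ws₁.flatten ++ [cls]).length = ws₁.flatten.length + 2 := by simp
      rw [hw₁] at hlen
      omega
    obtain ⟨mid, hcomb, hfI⟩ := key_build hG₁ hG₂ hf₁ hf₂ hderiv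
    have hrI : (⟨(A, B), Symbol.terminal opn :: mid ++ [Symbol.terminal cls]⟩ :
        ContextFreeRule (α ⊕ Bool) (interGrammar G₁ G₂).NT) ∈ (interGrammar G₁ G₂).rules := by
      refine mem_interGrammar_rules.mpr ⟨r₁, hr₁, r₂, hr₂,
        Symbol.terminal opn :: mid ++ [Symbol.terminal cls], ?_, ?_⟩
      · rw [hout₁, hout₂]
        have hcls : combine (N₁ := G₁.NT) (N₂ := G₂.NT)
            [Symbol.terminal (cls : α ⊕ Bool)] [Symbol.terminal cls] = some [Symbol.terminal cls] := by
          rw [combine_terminal_cons, combine_nil]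
          rfl
        have happ := combine_append hcomb hcls
        show combine (Symbol.terminal opn :: (mid₁ ++ [Symbol.terminal cls]))
          (Symbol.terminal opn :: (mid₂ ++ [Symbol.terminal cls])) = _
        rw [combine_terminal_cons, happ]
        rfl
      · rw [hin₁, hin₂]
        rfl
    have := pchar_mpr hrI rfl rfl hfI
    rwa [← hw₁] at this

lemma interGrammar_lang (hG₁ : IsParenthesisGrammar G₁) (hG₂ : IsParenthesisGrammar G₂) :
    (interGrammar G₁ G₂).language = G₁.language ⊓ G₂.language := by
  ext w
  constructor
  · intro h
    rw [mem_language_iff] at h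
    constructor
    · change w ∈ G₁.language
      rw [mem_language_iff]
      have hd1 := derives_map (g₁ := interGrammar G₁ G₂) (g := G₁)
        Prod.fst interGrammar_proj_fst h
      exact (map_mapSym_map_terminal (Prod.fst : G₁.NT × G₂.NT → G₁.NT) w) ▸ hd1
    · change w ∈ G₂.language
      rw [mem_language_iff]
      have hd2 := derives_map (g₁ := interGrammar G₁ G₂) (g := G₂)
        Prod.snd interGrammar_proj_snd h
      exact (map_mapSym_map_terminal (Prod.snd : G₁.NT × G₂.NT → G₂.NT) w) ▸ hd2
  · rintro ⟨h1, h2⟩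
    change w ∈ G₁.language at h1
    change w ∈ G₂.language at h2
    rw [mem_language_iff] at h1 h2 ⊢
    exact inter_forward hG₁ hG₂ w G₁.initial G₂.initial h1 h2

end Inter3
end PGAux

/-- **McNaughton's closure theorem for parenthesis languages (union and intersection).**
If `L₁` and `L₂` are generated by parenthesis grammars over the same terminal alphabet
`Σ ∪ {[, ]}`, then `L₁ ∪ L₂` and `L₁ ∩ L₂` are also generated by parenthesis grammars. -/
theorem parenthesis_closed_under_union_and_intersection {α : Type}
    (G₁ G₂ : ContextFreeGrammar.{0} (α ⊕ Bool))
    (h₁ : IsParenthesisGrammar G₁) (h₂ : IsParenthesisGrammar G₂) :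
    (∃ G : ContextFreeGrammar.{0} (α ⊕ Bool),
        IsParenthesisGrammar G ∧ G.language = G₁.language ⊔ G₂.language) ∧
    (∃ G : ContextFreeGrammar.{0} (α ⊕ Bool),
        IsParenthesisGrammar G ∧ G.language = G₁.language ⊓ G₂.language) := by
  constructor
  · exact ⟨PGAux.unionGrammar G₁ G₂, PGAux.unionGrammar_paren h₁ h₂, PGAux.unionGrammar_lang⟩
  · exact ⟨PGAux.interGrammar G₁ G₂, PGAux.interGrammar_paren h₁,
      PGAux.interGrammar_lang h₁ h₂⟩
end

section
/- Fischer normal form for operator precedence grammars: for every operator precedence grammar G there exists an operator precedence grammar G' with L(G') = L(G) that is in Fischer normal form, i.e., G' is invertible (no two productions of G' have the same right-hand side), G' has no empty rules (rules with right-hand side ε) except possibly S → ε, and no renaming rules (rules whose right-hand side is a single nonterminal) except possibly rules whose left-hand side is the axiom S. -/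
namespace OP

variable {T : Type}

/-- An *operator grammar* (OG): no production's right-hand side contains
two adjacent nonterminal symbols. -/
def IsOperatorGrammar (G : ContextFreeGrammar.{0} T) : Prop :=
  ∀ r ∈ G.rules,
    List.Chain'
      (fun s t => ∀ A B : G.NT,
        ¬ (s = Symbol.nonterminal A ∧ t = Symbol.nonterminal B))
      r.output

/-- The *left terminal set* `L_G(A) = {a ∈ Σ | A ⇒* B a α, B ∈ V_N ∪ {ε}}`. -/
def leftTerminals (G : ContextFreeGrammar.{0} T) (A : G.NT) : Set T :=
  {a | ∃ α : List (Symbol T G.NT),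
      G.Derives [Symbol.nonterminal A] (Symbol.terminal a :: α) ∨
      ∃ B : G.NT,
        G.Derives [Symbol.nonterminal A] (Symbol.nonterminal B :: Symbol.terminal a :: α)}

/-- The *right terminal set* `R_G(A) = {a ∈ Σ | A ⇒* α a B, B ∈ V_N ∪ {ε}}`. -/
def rightTerminals (G : ContextFreeGrammar.{0} T) (A : G.NT) : Set T :=
  {a | ∃ α : List (Symbol T G.NT),
      G.Derives [Symbol.nonterminal A] (α ++ [Symbol.terminal a]) ∨
      ∃ B : G.NT,
        G.Derives [Symbol.nonterminal A] (α ++ [Symbol.terminal a, Symbol.nonterminal B])}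

/-- `a ≐ b` (*equal in precedence*): some right-hand side contains `a B b`
with `B ∈ V_N ∪ {ε}`. -/
def EqPrec (G : ContextFreeGrammar.{0} T) (a b : T) : Prop :=
  ∃ r ∈ G.rules, ∃ u v : List (Symbol T G.NT),
    r.output = u ++ [Symbol.terminal a, Symbol.terminal b] ++ v ∨
    ∃ B : G.NT,
      r.output = u ++ [Symbol.terminal a, Symbol.nonterminal B, Symbol.terminal b] ++ v

/-- `a ⋗ b` (*takes precedence*): some right-hand side contains `D b` with `D ∈ V_N`
and `a ∈ R_G(D)`. -/
def TakesPrec (G : ContextFreeGrammar.{0} T) (a b : T) : Prop :=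
  ∃ r ∈ G.rules, ∃ (u v : List (Symbol T G.NT)) (D : G.NT),
    r.output = u ++ [Symbol.nonterminal D, Symbol.terminal b] ++ v ∧
    a ∈ rightTerminals G D

/-- `a ⋖ b` (*yields precedence*): some right-hand side contains `a D` with `D ∈ V_N`
and `b ∈ L_G(D)`. -/
def YieldsPrec (G : ContextFreeGrammar.{0} T) (a b : T) : Prop :=
  ∃ r ∈ G.rules, ∃ (u v : List (Symbol T G.NT)) (D : G.NT),
    r.output = u ++ [Symbol.terminal a, Symbol.nonterminal D] ++ v ∧
    b ∈ leftTerminals G D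

/-- The three operator precedence relations. -/
inductive Prec : Type
  | yields : Prec
  | eq : Prec
  | takes : Prec

/-- The *operator precedence matrix* `OPM(G)`: for each ordered pair `(a, b)` of
terminals, the set of precedence relations holding between `a` and `b`. -/
def opm (G : ContextFreeGrammar.{0} T) (a b : T) : Set Prec :=
  {p | (p = Prec.yields ∧ YieldsPrec G a b) ∨
       (p = Prec.eq ∧ EqPrec G a b) ∨
       (p = Prec.takes ∧ TakesPrec G a b)}

/-- A precedence matrix is *conflict-free* iff each entry contains at most one relation. -/
def ConflictFree (M : T → T → Set Prec) : Prop :=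
  ∀ a b, (M a b).Subsingleton

/-- An *operator precedence grammar* (OPG): an operator grammar whose operator
precedence matrix is conflict-free. -/
def IsOPG (G : ContextFreeGrammar.{0} T) : Prop :=
  IsOperatorGrammar G ∧ ConflictFree (opm G)

end OP



namespace OPProof

open ContextFreeGrammar

universe u
variable {T : Type}

/-! ### Generic list lemmas -/

theorem forall₂_append_decomp {α β : Type*} {R : α → β → Prop} :
    ∀ {u v : List β} {l : List α}, List.Forall₂ R l (u ++ v) →
      ∃ l₁ l₂, l = l₁ ++ l₂ ∧ List.Forall₂ R l₁ u ∧ List.Forall₂ R l₂ v := by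
  intro u
  induction u with
  | nil => intro v l h; exact ⟨[], l, rfl, List.Forall₂.nil, h⟩
  | cons b u ih =>
    intro v l h
    cases h with
    | cons hab h' =>
      obtain ⟨l₁, l₂, rfl, h₁, h₂⟩ := ih h'
      exact ⟨_ :: l₁, l₂, rfl, List.Forall₂.cons hab h₁, h₂⟩

theorem forall₂_append_comp {α β : Type*} {R : α → β → Prop} :
    ∀ {l₁ l₂ : List α} {u v : List β}, List.Forall₂ R l₁ u → List.Forall₂ R l₂ v →
      List.Forall₂ R (l₁ ++ l₂) (u ++ v) := by
  intro l₁ l₂ u v h₁ h₂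
  induction h₁ with
  | nil => exact h₂
  | cons hab _ ih => exact List.Forall₂.cons hab ih

theorem chain'_pattern {α : Type*} {R : α → α → Prop} :
    ∀ (u : List α) {a b : α} {v : List α}, List.Chain' R (u ++ a :: b :: v) → R a b := by
  intro u
  induction u with
  | nil =>
    intro a b v h
    exact (List.isChain_cons_cons.mp h).1
  | cons x u ih =>
    intro a b v h
    exact ih (v := v) h.tail

/-- Splitting `p ++ q = s ++ [x] ++ t`. -/
theorem append_singleton_split {α : Type*} {p q s t : List α} {x : α}
    (h : p ++ q = s ++ [x] ++ t) :
    (∃ t₁, p = s ++ [x] ++ t₁ ∧ t = t₁ ++ q) ∨ (∃ s₁, q = s₁ ++ [x] ++ t ∧ s = p ++ s₁) := by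
  rw [List.append_assoc] at h
  rcases List.append_eq_append_iff.mp h with ⟨a', ha, hb⟩ | ⟨c', hc, hd⟩
  · -- s = p ++ a', q = a' ++ ([x] ++ t)
    exact Or.inr ⟨a', by rw [hb, List.append_assoc], ha⟩
  · -- p = s ++ c', [x] ++ t = c' ++ q
    cases c' with
    | nil =>
      simp only [List.append_nil] at hc
      refine Or.inr ⟨[], ?_, by simp [hc]⟩
      simpa using hd.symm
    | cons y c'' =>
      simp only [List.cons_append, List.cons.injEq] at hd
      obtain ⟨rfl, ht⟩ := hd
      exact Or.inl ⟨c'', by rw [hc]; simp, ht⟩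

/-! ### Counted derivations -/

variable {g : ContextFreeGrammar.{0} T}

inductive DerivesIn (g : ContextFreeGrammar.{0} T) :
    List (Symbol T g.NT) → List (Symbol T g.NT) → ℕ → Prop
  | refl (u : List (Symbol T g.NT)) : DerivesIn g u u 0
  | head {u v w : List (Symbol T g.NT)} {n : ℕ} :
      g.Produces u v → DerivesIn g v w n → DerivesIn g u w (n + 1)

theorem DerivesIn.derives {u v : List (Symbol T g.NT)} {n : ℕ}
    (h : DerivesIn g u v n) : g.Derives u v := by
  induction h with
  | refl => exact Derives.refl _
  | head hp _ ih => exact hp.trans_derives ih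

theorem derives_iff_derivesIn {u v : List (Symbol T g.NT)} :
    g.Derives u v ↔ ∃ n, DerivesIn g u v n := by
  constructor
  · intro h
    induction h using Relation.ReflTransGen.head_induction_on with
    | refl => exact ⟨0, DerivesIn.refl _⟩
    | head hp _ ih => obtain ⟨n, hn⟩ := ih; exact ⟨n + 1, DerivesIn.head hp hn⟩
  · rintro ⟨n, hn⟩; exact hn.derives

theorem derivesIn_decomp {p q w : List (Symbol T g.NT)} {n : ℕ}
    (h : DerivesIn g (p ++ q) w n) :
    ∃ w₁ w₂ n₁ n₂, w = w₁ ++ w₂ ∧ n₁ + n₂ = n ∧ DerivesIn g p w₁ n₁ ∧ DerivesIn g q w₂ n₂ := by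
  induction n generalizing p q with
  | zero =>
    cases h
    exact ⟨p, q, 0, 0, rfl, rfl, DerivesIn.refl _, DerivesIn.refl _⟩
  | succ n ih =>
    cases h with
    | @head _ vmid _ _ hp hd =>
      obtain ⟨r, hr, hrw⟩ := hp
      obtain ⟨s, t, hst, hv⟩ := hrw.exists_parts
      rcases append_singleton_split hst with ⟨t₁, hp₁, rfl⟩ | ⟨s₁, hq₁, rfl⟩
      · -- rewrite inside p
        have hv' : vmid = (s ++ r.output ++ t₁) ++ q := by rw [hv]; simp
        rw [hv'] at hd
        obtain ⟨w₁, w₂, n₁, n₂, rfl, hn, h₁, h₂⟩ := ih hd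
        refine ⟨w₁, w₂, n₁ + 1, n₂, rfl, by omega, DerivesIn.head ⟨r, hr, ?_⟩ h₁, h₂⟩
        rw [hp₁]
        exact ContextFreeRule.rewrites_of_exists_parts r s t₁
      · -- rewrite inside q
        have hv' : vmid = p ++ (s₁ ++ r.output ++ t) := by rw [hv]; simp
        rw [hv'] at hd
        obtain ⟨w₁, w₂, n₁, n₂, rfl, hn, h₁, h₂⟩ := ih hd
        refine ⟨w₁, w₂, n₁, n₂ + 1, rfl, by omega, h₁, DerivesIn.head ⟨r, hr, ?_⟩ h₂⟩
        rw [hq₁]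
        exact ContextFreeRule.rewrites_of_exists_parts r s₁ t

theorem derivesIn_nil {w : List (Symbol T g.NT)} {n : ℕ}
    (h : DerivesIn g [] w n) : w = [] := by
  induction n with
  | zero => cases h; rfl
  | succ n ih =>
    cases h with
    | head hp hd =>
      obtain ⟨r, _, hrw⟩ := hp
      obtain ⟨s, t, hst, _⟩ := hrw.exists_parts
      exact absurd hst.symm (by simp)

theorem derivesIn_terminals {w' : List T} {w : List (Symbol T g.NT)} {n : ℕ}
    (h : DerivesIn g (w'.map Symbol.terminal) w n) : w = w'.map Symbol.terminal := by
  induction n with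
  | zero => cases h; rfl
  | succ n ih =>
    cases h with
    | head hp hd =>
      obtain ⟨r, _, hrw⟩ := hp
      obtain ⟨s, t, hst, _⟩ := hrw.exists_parts
      exfalso
      have : Symbol.nonterminal r.input ∈ w'.map (Symbol.terminal) := by
        rw [hst]; simp
      simp only [List.mem_map] at this
      obtain ⟨a, _, ha⟩ := this
      cases ha

theorem produces_singleton_nt {A : g.NT} {v : List (Symbol T g.NT)}
    (h : g.Produces [Symbol.nonterminal A] v) :
    ∃ r ∈ g.rules, r.input = A ∧ v = r.output := by
  obtain ⟨r, hr, hrw⟩ := h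
  obtain ⟨s, t, hst, hv⟩ := hrw.exists_parts
  cases s with
  | cons x s' =>
    exfalso
    have hlen := congrArg List.length hst
    simp only [List.length_append, List.length_cons, List.length_singleton] at hlen
    omega
  | nil =>
    simp only [List.nil_append, List.singleton_append, List.cons.injEq] at hst
    obtain ⟨hA, rfl⟩ := hst
    exact ⟨r, hr, (Symbol.nonterminal.inj hA).symm, by simpa using hv⟩

theorem derives_join {l : List (Symbol T g.NT)} {L : List (List (Symbol T g.NT))}
    (h : List.Forall₂ (fun s u => g.Derives [s] u) l L) :
    g.Derives l L.flatten := by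
  induction h with
  | nil => exact Derives.refl _
  | @cons s u l' L' hsu _ ih =>
    show g.Derives ([s] ++ l') (u ++ L'.flatten)
    exact (Derives.append_right hsu l').trans (Derives.append_left ih u)

theorem derives_empty_empty {w : List (Symbol T g.NT)} (h : g.Derives [] w) : w = [] := by
  rw [derives_iff_derivesIn] at h
  obtain ⟨n, hn⟩ := h
  exact derivesIn_nil hn

/-! ### The construction -/

variable (G : ContextFreeGrammar.{0} T)

/-- Nullable nonterminals. -/
def Nullable (B : G.NT) : Prop := G.Derives [Symbol.nonterminal B] []

/-- `Del G γ β`: `β` is obtained from `γ` by deleting some occurrences of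
nullable nonterminals. -/
inductive Del : List (Symbol T G.NT) → List (Symbol T G.NT) → Prop
  | nil : Del [] []
  | keep {s : Symbol T G.NT} {γ β : List (Symbol T G.NT)} : Del γ β → Del (s :: γ) (s :: β)
  | del {B : G.NT} {γ β : List (Symbol T G.NT)} :
      Nullable G B → Del γ β → Del (Symbol.nonterminal B :: γ) β

theorem Del.sublist {γ β : List (Symbol T G.NT)} (h : Del G γ β) : β.Sublist γ := by
  induction h with
  | nil => exact List.Sublist.refl _
  | keep _ ih => exact ih.cons₂ _
  | del _ _ ih => exact ih.cons _

theorem Del.derives {γ β : List (Symbol T G.NT)} (h : Del G γ β) : G.Derives γ β := by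
  induction h with
  | nil => exact ContextFreeGrammar.Derives.refl _
  | @keep s γ' β' _ ih => exact ih.append_left [s]
  | @del B γ' β' hB _ ih =>
    have h1 : G.Derives ([Symbol.nonterminal B] ++ γ') ([] ++ γ') := hB.append_right γ'
    simpa using h1.trans ih

theorem del_head_extract {γ β : List (Symbol T G.NT)} (h : Del G γ β) :
    ∀ {y : Symbol T G.NT} {v : List (Symbol T G.NT)}, β = y :: v →
    ∃ d γ', γ = d ++ y :: γ' ∧ (∀ s ∈ d, ∃ E, s = Symbol.nonterminal E) ∧ Del G γ' v := by
  induction h with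
  | nil => intro y v h; exact absurd h (by simp)
  | @keep s γ' β' hd _ =>
    intro y v h
    injection h with h1 h2
    subst h1; subst h2
    exact ⟨[], γ', rfl, by simp, hd⟩
  | @del B γ' β' hB hd ih =>
    intro y v h
    obtain ⟨d, γ'', rfl, hdnt, hdel⟩ := ih h
    refine ⟨Symbol.nonterminal B :: d, γ'', by simp, ?_, hdel⟩
    intro s hs
    rcases List.mem_cons.mp hs with rfl | hs
    · exact ⟨B, rfl⟩
    · exact hdnt s hs

theorem del_split {γ β : List (Symbol T G.NT)} (h : Del G γ β) :
    ∀ {u : List (Symbol T G.NT)} {x y : Symbol T G.NT} {v : List (Symbol T G.NT)},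
    β = u ++ x :: y :: v →
    ∃ u' d v', γ = u' ++ x :: (d ++ y :: v') ∧
      (∀ s ∈ d, ∃ E, s = Symbol.nonterminal E) ∧ Del G v' v := by
  induction h with
  | nil => intro u x y v h; exact absurd h (by simp)
  | @keep s γ' β' hd ih =>
    intro u x y v h
    cases u with
    | nil =>
      injection h with h1 h2
      subst h1
      obtain ⟨d, γ'', rfl, hdnt, hdel⟩ := del_head_extract G hd h2
      exact ⟨[], d, γ'', by simp, hdnt, hdel⟩
    | cons z u' =>
      rw [List.cons_append] at h
      injection h with h1 h2
      subst h1
      obtain ⟨u'', d, v', rfl, hdnt, hdel⟩ := ih h2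
      exact ⟨s :: u'', d, v', by simp, hdnt, hdel⟩
  | @del B γ' β' hB hd ih =>
    intro u x y v h
    obtain ⟨u'', d, v', rfl, hdnt, hdel⟩ := ih h
    exact ⟨Symbol.nonterminal B :: u'', d, v', by simp, hdnt, hdel⟩

/-- The nonterminals occurring in `G`. -/
def Occ : Set G.NT :=
  {G.initial} ∪ ⋃ r ∈ (G.rules : Set (ContextFreeRule T G.NT)),
    ({r.input} ∪ {B | Symbol.nonterminal B ∈ r.output})

theorem nts_finite {N : Type} : ∀ l : List (Symbol T N), {B | Symbol.nonterminal B ∈ l}.Finite := by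
  intro l
  induction l with
  | nil => simp
  | cons s l ih =>
    have : {B | Symbol.nonterminal B ∈ s :: l} ⊆
        {B | Symbol.nonterminal B = s} ∪ {B | Symbol.nonterminal B ∈ l} := by
      intro B hB
      rcases List.mem_cons.mp hB with h | h
      · exact Or.inl h
      · exact Or.inr h
    refine Set.Finite.subset (Set.Finite.union ?_ ih) this
    exact Set.Subsingleton.finite (fun a ha b hb => by
      simp only [Set.mem_setOf_eq] at ha hb
      exact Symbol.nonterminal.inj (ha.trans hb.symm))

theorem occ_finite : (Occ G).Finite := by
  refine Set.Finite.union (Set.finite_singleton _) ?_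
  exact Set.Finite.biUnion (G.rules).finite_toSet
    (fun r _ => Set.Finite.union (Set.finite_singleton _) (nts_finite r.output))

theorem initial_mem_occ : G.initial ∈ Occ G := Or.inl rfl

theorem output_nt_mem_occ {r : ContextFreeRule T G.NT} (hr : r ∈ G.rules) {B : G.NT}
    (hB : Symbol.nonterminal B ∈ r.output) : B ∈ Occ G :=
  Or.inr (Set.mem_biUnion hr (Or.inr hB))

/-- Rules of the ε-free, unit-free intermediate grammar. -/
def rules2Set : Set (ContextFreeRule T G.NT) :=
  {r | r.input ∈ Occ G ∧
    (∃ B γ, G.Derives [Symbol.nonterminal r.input] [Symbol.nonterminal B] ∧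
      (⟨B, γ⟩ : ContextFreeRule T G.NT) ∈ G.rules ∧ Del G γ r.output) ∧
    r.output ≠ [] ∧ ∀ N : G.NT, r.output ≠ [Symbol.nonterminal N]}

theorem sublists_finite {α : Type} (l : List α) : {β : List α | β.Sublist l}.Finite := by
  classical
  refine Set.Finite.subset (l.sublists.toFinset).finite_toSet ?_
  intro β hβ
  simp only [List.coe_toFinset, Set.mem_setOf_eq, List.mem_sublists]
  exact hβ

theorem rules2_finite : (rules2Set G).Finite := by
  have hsub : rules2Set G ⊆
      (fun p : G.NT × List (Symbol T G.NT) => ContextFreeRule.mk p.1 p.2) ''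
        ((Occ G) ×ˢ (⋃ r ∈ (G.rules : Set (ContextFreeRule T G.NT)), {β | β.Sublist r.output})) := by
    rintro ⟨A, β⟩ ⟨hA, ⟨B, γ, _, hrule, hdel⟩, _, _⟩
    exact ⟨(A, β), ⟨hA, Set.mem_biUnion hrule (Del.sublist G hdel)⟩, rfl⟩
  refine Set.Finite.subset (Set.Finite.image _ (Set.Finite.prod (occ_finite G) ?_)) hsub
  exact Set.Finite.biUnion (G.rules).finite_toSet (fun r _ => sublists_finite r.output)

/-- The intermediate grammar: ε-free and unit-free. -/
@[reducible] noncomputable def G2 : ContextFreeGrammar.{0} T :=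
  ⟨G.NT, G.initial, (rules2_finite G).toFinset⟩

theorem mem_G2_rules {r : ContextFreeRule T G.NT} :
    r ∈ (G2 G).rules ↔ r ∈ rules2Set G := Set.Finite.mem_toFinset _
theorem derives_context {g : ContextFreeGrammar.{0} T} {m m' : List (Symbol T g.NT)}
    (h : g.Derives m m') (p q : List (Symbol T g.NT)) :
    g.Derives (p ++ m ++ q) (p ++ m' ++ q) :=
  (h.append_left p).append_right q

theorem G2_sound {u v : List (Symbol T G.NT)} (h : (G2 G).Derives u v) : G.Derives u v := by
  induction h with
  | refl => exact ContextFreeGrammar.Derives.refl _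
  | tail _ hlast ih =>
    obtain ⟨r, hr, hrw⟩ := hlast
    rw [mem_G2_rules] at hr
    obtain ⟨_, ⟨B, γ, hunit, hmem, hdel⟩, _, _⟩ := hr
    obtain ⟨p, q, rfl, rfl⟩ := hrw.exists_parts
    refine ih.trans (derives_context (g := G) ?_ p q)
    exact hunit.trans (ContextFreeGrammar.Produces.trans_derives
      ⟨⟨B, γ⟩, hmem, ContextFreeRule.Rewrites.input_output⟩ (Del.derives G hdel))

theorem G2_surgery {A B : G.NT} {β : List (Symbol T G.NT)}
    (h : (⟨B, β⟩ : ContextFreeRule T G.NT) ∈ rules2Set G)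
    (hAB : G.Derives [Symbol.nonterminal A] [Symbol.nonterminal B]) (hA : A ∈ Occ G) :
    (⟨A, β⟩ : ContextFreeRule T G.NT) ∈ rules2Set G := by
  obtain ⟨_, ⟨B', γ, hunit, hmem, hdel⟩, h1, h2⟩ := h
  exact ⟨hA, ⟨B', γ, hAB.trans hunit, hmem, hdel⟩, h1, h2⟩

theorem G2_first_step {B : G.NT} {w : List (Symbol T G.NT)}
    (h : (G2 G).Derives [Symbol.nonterminal B] w) (hw : w ≠ [Symbol.nonterminal B]) :
    ∃ β, (⟨B, β⟩ : ContextFreeRule T G.NT) ∈ rules2Set G ∧ (G2 G).Derives β w := by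
  rcases h.eq_or_head with rfl | ⟨v, hp, hd⟩
  · exact absurd rfl hw
  · obtain ⟨r, hr, hinput, rfl⟩ := produces_singleton_nt hp
    rw [mem_G2_rules] at hr
    exact ⟨r.output, by rw [← hinput]; exact hr, hd⟩

theorem G2_produces_nonnil {u v : List (Symbol T G.NT)} (h : (G2 G).Produces u v) : v ≠ [] := by
  obtain ⟨r, hr, hrw⟩ := h
  rw [mem_G2_rules] at hr
  obtain ⟨p, q, _, rfl⟩ := hrw.exists_parts
  intro hc
  exact hr.2.2.1 (List.append_eq_nil_iff.mp (List.append_eq_nil_iff.mp hc).1).2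

theorem G2_nonnil {u w : List (Symbol T G.NT)} (h : (G2 G).Derives u w) (hu : u ≠ []) :
    w ≠ [] := by
  rcases h.eq_or_tail with rfl | ⟨v, _, hp⟩
  · exact hu
  · exact G2_produces_nonnil G hp

/-- Pieces of a derivation of a terminal word from a sentential form. -/
def PieceRel (g : ContextFreeGrammar.{0} T) (n : ℕ) (s : Symbol T g.NT) (wi : List T) : Prop :=
  (∃ a, s = Symbol.terminal a ∧ wi = [a]) ∨
  (∃ B, s = Symbol.nonterminal B ∧
    ∃ k ≤ n, DerivesIn g [Symbol.nonterminal B] (wi.map Symbol.terminal) k)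

theorem pieceRel_mono {g : ContextFreeGrammar.{0} T} {n n' : ℕ} (hn : n ≤ n')
    {s : Symbol T g.NT} {wi : List T} (h : PieceRel g n s wi) : PieceRel g n' s wi := by
  rcases h with h | ⟨B, hB, k, hk, hd⟩
  · exact Or.inl h
  · exact Or.inr ⟨B, hB, k, hk.trans hn, hd⟩

theorem pieces {g : ContextFreeGrammar.{0} T} :
    ∀ {γ : List (Symbol T g.NT)} {w : List T} {n : ℕ},
    DerivesIn g γ (w.map Symbol.terminal) n →
    ∃ ws : List (List T), w = ws.flatten ∧ List.Forall₂ (PieceRel g n) γ ws := by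
  intro γ
  induction γ with
  | nil =>
    intro w n h
    have hnil := derivesIn_nil (g := g) h
    exact ⟨[], by simpa using List.map_eq_nil_iff.mp hnil, List.Forall₂.nil⟩
  | cons s γ' ih =>
    intro w n h
    rw [show s :: γ' = [s] ++ γ' from rfl] at h
    obtain ⟨t₁, t₂, n₁, n₂, hw, hn, h₁, h₂⟩ := derivesIn_decomp h
    obtain ⟨wa, wb, rfl, hta, htb⟩ := List.map_eq_append_iff.mp hw
    subst hta htb
    obtain ⟨ws', hwb, hfa⟩ := ih h₂
    cases s with
    | terminal a =>
      have h1a : wa.map (Symbol.terminal : T → Symbol T g.NT) = [Symbol.terminal a] := by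
        have := derivesIn_terminals (w' := [a]) (by simpa using h₁)
        simpa using this
      have hwa : wa = [a] := by
        cases wa with
        | nil => simp at h1a
        | cons x l =>
          simp only [List.map_cons, List.cons.injEq] at h1a
          obtain ⟨hx, hl⟩ := h1a
          simp [Symbol.terminal.inj hx, List.map_eq_nil_iff.mp hl]
      refine ⟨wa :: ws', by simp [hwb], List.Forall₂.cons (Or.inl ⟨a, rfl, hwa⟩) ?_⟩
      exact hfa.imp (fun _ _ hp => pieceRel_mono (by omega) hp)
    | nonterminal B =>
      refine ⟨wa :: ws', by simp [hwb],
        List.Forall₂.cons (Or.inr ⟨B, rfl, ⟨n₁, by omega, h₁⟩⟩) ?_⟩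
      exact hfa.imp (fun _ _ hp => pieceRel_mono (by omega) hp)

theorem buildβ (m : ℕ)
    (IH : ∀ k ≤ m, ∀ A : G.NT, ∀ w : List T, A ∈ Occ G → w ≠ [] →
      DerivesIn G [Symbol.nonterminal A] (w.map Symbol.terminal) k →
      (G2 G).Derives [Symbol.nonterminal A] (w.map Symbol.terminal)) :
    ∀ {γ : List (Symbol T G.NT)} {ws : List (List T)},
    List.Forall₂ (PieceRel G m) γ ws → (∀ B, Symbol.nonterminal B ∈ γ → B ∈ Occ G) →
    ∃ (β : List (Symbol T G.NT)) (ws' : List (List T)), Del G γ β ∧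
      ws.flatten = ws'.flatten ∧
      List.Forall₂ (fun s wi => wi ≠ [] ∧ (G2 G).Derives [s] (wi.map Symbol.terminal)) β ws' := by
  intro γ ws h
  induction h with
  | nil => exact fun _ => ⟨[], [], Del.nil, rfl, List.Forall₂.nil⟩
  | @cons s wi γ' ws' hswi _ ih =>
    intro hocc
    obtain ⟨β', ws'', hdel, hflat, hfa⟩ := ih (fun B hB => hocc B (List.mem_cons_of_mem _ hB))
    rcases hswi with ⟨a, rfl, rfl⟩ | ⟨B, rfl, k, hk, hd⟩
    · refine ⟨Symbol.terminal a :: β', [a] :: ws'', Del.keep hdel, by simp [hflat],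
        List.Forall₂.cons ⟨by simp, ?_⟩ hfa⟩
      simp only [List.map_cons, List.map_nil]
      exact ContextFreeGrammar.Derives.refl _
    · by_cases hwi : wi = []
      · subst hwi
        exact ⟨β', ws'', Del.del (hd.derives) hdel, by simpa using hflat, hfa⟩
      · refine ⟨Symbol.nonterminal B :: β', wi :: ws'', Del.keep hdel, by simp [hflat],
          List.Forall₂.cons ⟨hwi, ?_⟩ hfa⟩
        exact IH k hk B wi (hocc B (by simp)) hwi hd

theorem map_terminal_ne_single_nt {B : G.NT} {w : List T} (hw : w ≠ []) :
    w.map Symbol.terminal ≠ [Symbol.nonterminal B] := by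
  cases w with
  | nil => exact absurd rfl hw
  | cons x l => simp

theorem G2_complete : ∀ n : ℕ, ∀ A : G.NT, ∀ w : List T, A ∈ Occ G → w ≠ [] →
    DerivesIn G [Symbol.nonterminal A] (w.map Symbol.terminal) n →
    (G2 G).Derives [Symbol.nonterminal A] (w.map Symbol.terminal) := by
  intro n
  induction n using Nat.strong_induction_on with
  | _ n ihn =>
    intro A w hA hw hder
    generalize hv : w.map Symbol.terminal = vfin at hder
    cases hder with
    | refl => exact absurd hv (map_terminal_ne_single_nt G hw)
    | @head _ v _ m hp hrest =>
      subst hv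
      obtain ⟨r, hr, hinput, rfl⟩ := produces_singleton_nt hp
      obtain ⟨ws, hwflat, hfa⟩ := pieces hrest
      obtain ⟨β, ws', hdel, hflat, hq⟩ :=
        buildβ G m (fun k hk => ihn k (by omega)) hfa
          (fun B hB => output_nt_mem_occ G hr hB)
      have hAself : G.Derives [Symbol.nonterminal A] [Symbol.nonterminal A] :=
        ContextFreeGrammar.Derives.refl _
      have hw' : w = ws'.flatten := by rw [hwflat, hflat]
      by_cases hunit : ∃ B : G.NT, β = [Symbol.nonterminal B]
      · -- renaming case
        obtain ⟨B, rfl⟩ := hunit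
        obtain ⟨wi, ws'', hq1, hq2, rfl⟩ := List.forall₂_cons_left_iff.mp hq
        have hws'' : ws'' = [] := List.forall₂_nil_left_iff.mp hq2
        subst hws''
        have hw1 : w = wi := by simpa using hw'
        subst hw1
        have hAB : G.Derives [Symbol.nonterminal A] [Symbol.nonterminal B] := by
          refine ContextFreeGrammar.Produces.trans_derives ?_ (Del.derives G hdel)
          rw [← hinput]
          exact ⟨r, hr, ContextFreeRule.Rewrites.input_output⟩
        obtain ⟨β₂, hβ₂, hd₂⟩ := G2_first_step G hq1.2 (map_terminal_ne_single_nt G hq1.1)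
        refine ContextFreeGrammar.Produces.trans_derives ?_ hd₂
        exact ⟨⟨A, β₂⟩, (mem_G2_rules G).mpr (G2_surgery G hβ₂ hAB hA),
          ContextFreeRule.Rewrites.input_output⟩
      · by_cases hnil : β = []
        · subst hnil
          have : ws' = [] := List.forall₂_nil_left_iff.mp hq
          subst this
          exact absurd (by simpa using hw') hw
        · -- proper rule
          have hrule : (⟨A, β⟩ : ContextFreeRule T G.NT) ∈ rules2Set G := by
            refine ⟨hA, ⟨A, r.output, hAself, by rw [← hinput]; exact hr, hdel⟩, hnil, ?_⟩
            intro N hN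
            exact hunit ⟨N, hN⟩
          refine ContextFreeGrammar.Produces.trans_derives
            ⟨⟨A, β⟩, (mem_G2_rules G).mpr hrule, ContextFreeRule.Rewrites.input_output⟩ ?_
          have hfa2 : List.Forall₂ (fun s u => (G2 G).Derives [s] u) β
              (ws'.map (List.map Symbol.terminal)) := by
            rw [List.forall₂_map_right_iff]
            exact hq.imp (fun s wi hp => hp.2)
          have := derives_join hfa2
          rw [hw']
          simpa using this
/-! ### The final grammar: powerset construction over `G2` -/

/-- Matching relation between a symbol over `G.NT` and a symbol over `Option (Set G.NT)`. -/
def MR (s : Symbol T G.NT) (s' : Symbol T (Option (Set G.NT))) : Prop :=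
  (∃ a : T, s = Symbol.terminal a ∧ s' = Symbol.terminal a) ∨
  (∃ (B : G.NT) (𝒜 : Set G.NT), s = Symbol.nonterminal B ∧
    s' = Symbol.nonterminal (some 𝒜) ∧ B ∈ 𝒜 ∧ 𝒜 ⊆ Occ G)

/-- Matching of strings. -/
def Match (γ : List (Symbol T G.NT)) (δ : List (Symbol T (Option (Set G.NT)))) : Prop :=
  List.Forall₂ (MR G) γ δ

theorem mr_finite (s : Symbol T G.NT) : {s' | MR G s s'}.Finite := by
  have hsub : {s' | MR G s s'} ⊆
      (fun a : T => (Symbol.terminal a : Symbol T (Option (Set G.NT)))) ''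
        {a | s = Symbol.terminal a} ∪
      (fun 𝒜 : Set G.NT => (Symbol.nonterminal (some 𝒜) : Symbol T (Option (Set G.NT)))) ''
        {𝒜 | 𝒜 ⊆ Occ G} := by
    rintro s' (⟨a, h1, rfl⟩ | ⟨B, 𝒜, h1, rfl, h3, h4⟩)
    · exact Or.inl ⟨a, h1, rfl⟩
    · exact Or.inr ⟨𝒜, h4, rfl⟩
  refine Set.Finite.subset (Set.Finite.union (Set.Finite.image _ ?_) (Set.Finite.image _ ?_)) hsub
  · exact Set.Subsingleton.finite (fun a ha b hb => by
      simp only [Set.mem_setOf_eq] at ha hb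
      exact Symbol.terminal.inj (ha.symm.trans hb))
  · exact Set.Finite.finite_subsets (occ_finite G)

theorem match_finite : ∀ γ : List (Symbol T G.NT), {δ | Match G γ δ}.Finite := by
  intro γ
  induction γ with
  | nil =>
    refine Set.Finite.subset (Set.finite_singleton []) ?_
    intro δ hδ
    simpa using List.forall₂_nil_left_iff.mp hδ
  | cons s γ' ih =>
    have hsub : {δ | Match G (s :: γ') δ} ⊆
        (fun p : Symbol T (Option (Set G.NT)) × List (Symbol T (Option (Set G.NT))) =>
          p.1 :: p.2) '' ({s' | MR G s s'} ×ˢ {δ | Match G γ' δ}) := by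
      intro δ hδ
      obtain ⟨s', δ', h1, h2, rfl⟩ := List.forall₂_cons_left_iff.mp hδ
      exact ⟨(s', δ'), ⟨h1, h2⟩, rfl⟩
    exact Set.Finite.subset (Set.Finite.image _ (Set.Finite.prod (mr_finite G s) ih)) hsub

/-- The shapes: all matchings of right-hand sides of `G2`. -/
def ShapeSet : Set (List (Symbol T (Option (Set G.NT)))) :=
  ⋃ r ∈ rules2Set G, {δ | Match G r.output δ}

theorem shapeSet_finite : (ShapeSet G).Finite :=
  Set.Finite.biUnion (rules2_finite G) (fun r _ => match_finite G r.output)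

/-- The inverse set of a shape. -/
def invSet (δ : List (Symbol T (Option (Set G.NT)))) : Set G.NT :=
  {A | A ∈ Occ G ∧ ∃ γ, (⟨A, γ⟩ : ContextFreeRule T G.NT) ∈ rules2Set G ∧ Match G γ δ}

/-- The rules of the final grammar. -/
def rulesFSet : Set (ContextFreeRule T (Option (Set G.NT))) :=
  {r | (∃ δ ∈ ShapeSet G, r = ⟨some (invSet G δ), δ⟩) ∨
       (∃ 𝒜 : Set G.NT, 𝒜 ⊆ Occ G ∧ G.initial ∈ 𝒜 ∧
          r = ⟨none, [Symbol.nonterminal (some 𝒜)]⟩) ∨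
       ([] ∈ G.language ∧ r = ⟨none, ([] : List (Symbol T (Option (Set G.NT))))⟩)}

theorem rulesF_finite : (rulesFSet G).Finite := by
  have hsub : rulesFSet G ⊆
      (fun δ => (⟨some (invSet G δ), δ⟩ : ContextFreeRule T (Option (Set G.NT)))) ''
          ShapeSet G ∪
      ((fun 𝒜 : Set G.NT =>
          (⟨none, [Symbol.nonterminal (some 𝒜)]⟩ : ContextFreeRule T (Option (Set G.NT)))) ''
          {𝒜 | 𝒜 ⊆ Occ G} ∪
        {(⟨none, []⟩ : ContextFreeRule T (Option (Set G.NT)))}) := by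
    rintro r (⟨δ, hδ, rfl⟩ | ⟨𝒜, h1, h2, rfl⟩ | ⟨h1, rfl⟩)
    · exact Or.inl ⟨δ, hδ, rfl⟩
    · exact Or.inr (Or.inl ⟨𝒜, h1, rfl⟩)
    · exact Or.inr (Or.inr rfl)
  refine Set.Finite.subset ?_ hsub
  exact Set.Finite.union (Set.Finite.image _ (shapeSet_finite G))
    (Set.Finite.union (Set.Finite.image _ (Set.Finite.finite_subsets (occ_finite G)))
      (Set.finite_singleton _))

/-- The final grammar. -/
@[reducible] noncomputable def GF : ContextFreeGrammar.{0} T :=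
  ⟨Option (Set G.NT), none, (rulesF_finite G).toFinset⟩

theorem mem_GF_rules {r : ContextFreeRule T (Option (Set G.NT))} :
    r ∈ (GF G).rules ↔ r ∈ rulesFSet G := Set.Finite.mem_toFinset _
/-! ### Simulation lemmas -/

theorem match_terminals : ∀ {w : List T} {γ : List (Symbol T G.NT)},
    Match G γ (w.map Symbol.terminal) → γ = w.map Symbol.terminal := by
  intro w
  induction w with
  | nil =>
    intro γ h
    simpa using List.forall₂_nil_right_iff.mp h
  | cons a w' ih =>
    intro γ h
    obtain ⟨s, γ', hmr, h2, rfl⟩ := List.forall₂_cons_right_iff.mp h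
    rcases hmr with ⟨b, rfl, hb⟩ | ⟨B, 𝒜, rfl, hc, _, _⟩
    · rw [Symbol.terminal.inj hb] at *
      rw [List.map_cons, ih h2]
    · exact absurd hc (by simp)

theorem GF_proj {u t : List (Symbol T (Option (Set G.NT)))}
    (h : ContextFreeGrammar.Derives (GF G) u t) :
    ∀ u', Match G u' u → ∃ t', Match G t' t ∧ (G2 G).Derives u' t' := by
  induction h using Relation.ReflTransGen.head_induction_on with
  | refl => exact fun u' hu' => ⟨u', hu', ContextFreeGrammar.Derives.refl _⟩
  | head hp _ ih =>
    rename_i x y _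
    intro u' hu'
    obtain ⟨r, hr, hrw⟩ := hp
    obtain ⟨p, q, rfl, rfl⟩ := hrw.exists_parts
    rw [List.append_assoc] at hu'
    obtain ⟨p', rest, rfl, hp', hrest⟩ := forall₂_append_decomp hu'
    obtain ⟨m', q', rfl, hm', hq'⟩ := forall₂_append_decomp hrest
    obtain ⟨sm, m'', hmr, hm2, rfl⟩ := List.forall₂_cons_right_iff.mp hm'
    have hm'' : m'' = [] := List.forall₂_nil_right_iff.mp hm2
    subst hm''
    rcases hmr with ⟨a, rfl, ha⟩ | ⟨B, 𝒜, rfl, hs, hB𝒜, hsub⟩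
    · exact absurd ha (by simp)
    · -- the rewritten symbol is a nonterminal `some 𝒜`
      have hin : r.input = some 𝒜 := Symbol.nonterminal.inj hs
      rw [mem_GF_rules] at hr
      rcases hr with ⟨δ, hδ, rfl⟩ | ⟨𝒜', _, _, rfl⟩ | ⟨_, rfl⟩
      · -- shape rule
        simp only at hin
        have h𝒜 : 𝒜 = invSet G δ := by
          have := hin
          exact (Option.some.injEq .. ▸ this).symm ▸ rfl
        subst h𝒜
        obtain ⟨_, γc, hγc, hmatchc⟩ := hB𝒜
        have hstep : (G2 G).Produces (p' ++ ([Symbol.nonterminal B] ++ q'))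
            (p' ++ (γc ++ q')) := by
          have : (G2 G).Produces (p' ++ [Symbol.nonterminal B] ++ q') (p' ++ γc ++ q') :=
            ⟨⟨B, γc⟩, (mem_G2_rules G).mpr hγc,
              ContextFreeRule.rewrites_of_exists_parts ⟨B, γc⟩ p' q'⟩
          simpa [List.append_assoc] using this
        have hcomp : Match G (p' ++ (γc ++ q')) (p ++ (δ : List (Symbol T (GF G).NT)) ++ q) := by
          rw [List.append_assoc]
          exact forall₂_append_comp hp' (forall₂_append_comp hmatchc hq')
        obtain ⟨t', ht', hd⟩ := ih (p' ++ (γc ++ q')) hcomp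
        exact ⟨t', ht', hstep.trans_derives hd⟩
      · exact absurd hin (by simp)
      · exact absurd hin (by simp)

theorem rules2_output_nts {r : ContextFreeRule T G.NT} (hr : r ∈ rules2Set G) {B : G.NT}
    (hB : Symbol.nonterminal B ∈ r.output) : B ∈ Occ G := by
  obtain ⟨_, ⟨B', γ, _, hm, hdel⟩, _, _⟩ := hr
  exact output_nt_mem_occ G hm ((Del.sublist G hdel).subset hB)

theorem buildδ (m : ℕ)
    (IH : ∀ k ≤ m, ∀ B : G.NT, ∀ w : List T, B ∈ Occ G →
      DerivesIn (G2 G) [Symbol.nonterminal B] (w.map Symbol.terminal) k →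
      ∃ 𝒜 : Set G.NT, B ∈ 𝒜 ∧ 𝒜 ⊆ Occ G ∧
        (GF G).Derives [Symbol.nonterminal (some 𝒜)] (w.map Symbol.terminal)) :
    ∀ {β : List (Symbol T G.NT)} {ws : List (List T)},
    List.Forall₂ (PieceRel (G2 G) m) β ws → (∀ B, Symbol.nonterminal B ∈ β → B ∈ Occ G) →
    ∃ δ, Match G β δ ∧
      List.Forall₂ (fun s' wi => (GF G).Derives [s'] (wi.map Symbol.terminal)) δ ws := by
  intro β ws h
  induction h with
  | nil => exact fun _ => ⟨[], List.Forall₂.nil, List.Forall₂.nil⟩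
  | @cons s wi β' ws' hswi _ ih =>
    intro hocc
    obtain ⟨δ', hmatch, hfa⟩ := ih (fun B hB => hocc B (List.mem_cons_of_mem _ hB))
    rcases hswi with ⟨a, rfl, rfl⟩ | ⟨B, rfl, k, hk, hd⟩
    · refine ⟨Symbol.terminal a :: δ', List.Forall₂.cons (Or.inl ⟨a, rfl, rfl⟩) hmatch,
        List.Forall₂.cons ?_ hfa⟩
      simp only [List.map_cons, List.map_nil]
      exact ContextFreeGrammar.Derives.refl _
    · obtain ⟨𝒜, hB𝒜, hsub, hder⟩ := IH k hk B wi (hocc B (by simp)) hd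
      exact ⟨Symbol.nonterminal (some 𝒜) :: δ',
        List.Forall₂.cons (Or.inr ⟨B, 𝒜, rfl, rfl, hB𝒜, hsub⟩) hmatch,
        List.Forall₂.cons hder hfa⟩

theorem GF_complete : ∀ n : ℕ, ∀ B : G.NT, ∀ w : List T, B ∈ Occ G →
    DerivesIn (G2 G) [Symbol.nonterminal B] (w.map Symbol.terminal) n →
    ∃ 𝒜 : Set G.NT, B ∈ 𝒜 ∧ 𝒜 ⊆ Occ G ∧
      (GF G).Derives [Symbol.nonterminal (some 𝒜)] (w.map Symbol.terminal) := by
  intro n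
  induction n using Nat.strong_induction_on with
  | _ n ihn =>
    intro B w hB hder
    generalize hv : w.map Symbol.terminal = vfin at hder
    cases hder with
    | refl =>
      exfalso
      cases w with
      | nil => simp at hv
      | cons x l => simp at hv
    | @head _ v _ m hp hrest =>
      subst hv
      obtain ⟨r, hr, hin, rfl⟩ := produces_singleton_nt hp
      rw [mem_G2_rules] at hr
      have hreq : (⟨B, r.output⟩ : ContextFreeRule T G.NT) = r := by
        cases r; cases hin; rfl
      obtain ⟨ws, hwflat, hfa⟩ := pieces hrest
      obtain ⟨δ, hmatch, hfa'⟩ := buildδ G m (fun k hk => ihn k (by omega)) hfa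
        (fun B' hB' => rules2_output_nts G hr hB')
      have hr' : (⟨B, r.output⟩ : ContextFreeRule T G.NT) ∈ rules2Set G := hreq ▸ hr
      have hBinv : B ∈ invSet G δ := ⟨hB, r.output, hr', hmatch⟩
      have hshape : δ ∈ ShapeSet G := Set.mem_biUnion hr' hmatch
      have hrule : (⟨some (invSet G δ), δ⟩ : ContextFreeRule T (Option (Set G.NT))) ∈
          (GF G).rules := (mem_GF_rules G).mpr (Or.inl ⟨δ, hshape, rfl⟩)
      refine ⟨invSet G δ, hBinv, fun A hA => hA.1, ?_⟩
      refine ContextFreeGrammar.Produces.trans_derives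
        ⟨_, hrule, ContextFreeRule.Rewrites.input_output⟩ ?_
      have hfa2 : List.Forall₂ (fun s' u => (GF G).Derives [s'] u) δ
          (ws.map (List.map Symbol.terminal)) := by
        rw [List.forall₂_map_right_iff]
        exact hfa'
      have := derives_join hfa2
      rw [hwflat]
      simpa using this

theorem GF_language : (GF G).language = G.language := by
  ext w
  rw [ContextFreeGrammar.mem_language_iff, ContextFreeGrammar.mem_language_iff]
  constructor
  · intro h
    rcases h.eq_or_head with heq | ⟨v, hp, hrest⟩
    · exfalso; cases w <;> simp at heq
    · obtain ⟨r, hr, hin, rfl⟩ := produces_singleton_nt hp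
      rw [mem_GF_rules] at hr
      rcases hr with ⟨δ, _, rfl⟩ | ⟨𝒜, hsub, hS, rfl⟩ | ⟨hε, rfl⟩
      · exact absurd hin (by simp [GF])
      · obtain ⟨t', ht', hd₂⟩ := GF_proj G hrest [Symbol.nonterminal G.initial]
          (List.Forall₂.cons (Or.inr ⟨G.initial, 𝒜, rfl, rfl, hS, hsub⟩) List.Forall₂.nil)
        rw [match_terminals G ht'] at hd₂
        exact G2_sound G hd₂
      · have : w.map (Symbol.terminal : T → Symbol T (Option (Set G.NT))) = [] :=
          derives_empty_empty hrest
        rw [List.map_eq_nil_iff.mp this]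
        exact (ContextFreeGrammar.mem_language_iff G []).mp hε
  · intro h
    by_cases hw : w = []
    · subst hw
      have hε : [] ∈ G.language := (ContextFreeGrammar.mem_language_iff G []).mpr h
      have hrule : (⟨none, ([] : List (Symbol T (Option (Set G.NT))))⟩ :
          ContextFreeRule T (Option (Set G.NT))) ∈ (GF G).rules :=
        (mem_GF_rules G).mpr (Or.inr (Or.inr ⟨hε, rfl⟩))
      exact ContextFreeGrammar.Produces.single
        ⟨_, hrule, ContextFreeRule.Rewrites.input_output⟩
    · obtain ⟨n, hn⟩ := derives_iff_derivesIn.mp h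
      have h2 : (G2 G).Derives [Symbol.nonterminal G.initial] (w.map Symbol.terminal) :=
        G2_complete G n G.initial w (initial_mem_occ G) hw hn
      obtain ⟨n₂, hn₂⟩ := derives_iff_derivesIn.mp h2
      obtain ⟨𝒜, hS, hsub, hd⟩ := GF_complete G n₂ G.initial w (initial_mem_occ G) hn₂
      have hrule : (⟨none, [Symbol.nonterminal (some 𝒜)]⟩ :
          ContextFreeRule T (Option (Set G.NT))) ∈ (GF G).rules :=
        (mem_GF_rules G).mpr (Or.inr (Or.inl ⟨𝒜, hsub, hS, rfl⟩))
      exact ContextFreeGrammar.Produces.trans_derives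
        ⟨_, hrule, ContextFreeRule.Rewrites.input_output⟩ hd
/-! ### Transfer of precedence relations -/

theorem chain'_of_pattern {α : Type*} {R : α → α → Prop} :
    ∀ (l : List α), (∀ u (a b : α) v, l = u ++ a :: b :: v → R a b) → List.Chain' R l
  | [] => fun _ => List.isChain_nil
  | [_] => fun _ => List.isChain_singleton _
  | a :: b :: l => fun h =>
      List.isChain_cons_cons.mpr ⟨h [] a b l rfl,
        chain'_of_pattern (b :: l) (fun u x y v hu => h (a :: u) x y v (by rw [List.cons_append, hu]))⟩

theorem match_pattern {γ δ : List _} {u : List (Symbol T (Option (Set G.NT)))}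
    {x y : Symbol T (Option (Set G.NT))} {v : List (Symbol T (Option (Set G.NT)))}
    (h : Match G γ δ) (hδ : δ = u ++ x :: y :: v) :
    ∃ u' sx sy v', γ = u' ++ sx :: sy :: v' ∧ MR G sx x ∧ MR G sy y := by
  subst hδ
  obtain ⟨u', rest, rfl, _, hrest⟩ := forall₂_append_decomp h
  obtain ⟨sx, rest2, hx, hrest2, rfl⟩ := List.forall₂_cons_right_iff.mp hrest
  obtain ⟨sy, rest3, hy, _, rfl⟩ := List.forall₂_cons_right_iff.mp hrest2
  exact ⟨u', sx, sy, rest3, rfl, hx, hy⟩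

theorem match_pattern3 {γ δ : List _} {u : List (Symbol T (Option (Set G.NT)))}
    {x y z : Symbol T (Option (Set G.NT))} {v : List (Symbol T (Option (Set G.NT)))}
    (h : Match G γ δ) (hδ : δ = u ++ x :: y :: z :: v) :
    ∃ u' sx sy sz v', γ = u' ++ sx :: sy :: sz :: v' ∧ MR G sx x ∧ MR G sy y ∧ MR G sz z := by
  subst hδ
  obtain ⟨u', rest, rfl, _, hrest⟩ := forall₂_append_decomp h
  obtain ⟨sx, rest2, hx, hrest2, rfl⟩ := List.forall₂_cons_right_iff.mp hrest
  obtain ⟨sy, rest3, hy, hrest3, rfl⟩ := List.forall₂_cons_right_iff.mp hrest2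
  obtain ⟨sz, rest4, hz, _, rfl⟩ := List.forall₂_cons_right_iff.mp hrest3
  exact ⟨u', sx, sy, sz, rest4, rfl, hx, hy, hz⟩

theorem mr_terminal {a : T} {s : Symbol T G.NT}
    (h : MR G s (Symbol.terminal a)) : s = Symbol.terminal a := by
  rcases h with ⟨b, rfl, hb⟩ | ⟨B, 𝒜, rfl, hc, _, _⟩
  · rw [Symbol.terminal.inj hb]
  · exact absurd hc (by simp)

theorem mr_nonterminal {D : Option (Set G.NT)} {s : Symbol T G.NT}
    (h : MR G s (Symbol.nonterminal D)) :
    ∃ (B : G.NT) (𝒟 : Set G.NT), s = Symbol.nonterminal B ∧ D = some 𝒟 ∧ B ∈ 𝒟 ∧ 𝒟 ⊆ Occ G := by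
  rcases h with ⟨b, rfl, hb⟩ | ⟨B, 𝒜, rfl, hc, h1, h2⟩
  · exact absurd hb (by simp)
  · exact ⟨B, 𝒜, rfl, Symbol.nonterminal.inj hc, h1, h2⟩

/-- Left terminal sets transfer from `GF` to `G2`. -/
theorem leftT_GF {𝒟 : Set G.NT} {D : G.NT} (hD : D ∈ 𝒟) (hsub : 𝒟 ⊆ Occ G) {a : T}
    (h : a ∈ OP.leftTerminals (GF G) (some 𝒟)) : a ∈ OP.leftTerminals (G2 G) D := by
  obtain ⟨α, hd | ⟨B', hd⟩⟩ := h
  · obtain ⟨t', hm, hd₂⟩ := GF_proj G hd [Symbol.nonterminal D]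
      (List.Forall₂.cons (Or.inr ⟨D, 𝒟, rfl, rfl, hD, hsub⟩) List.Forall₂.nil)
    obtain ⟨s, γ', hs, _, rfl⟩ := List.forall₂_cons_right_iff.mp hm
    rw [mr_terminal G hs] at hd₂
    exact ⟨γ', Or.inl hd₂⟩
  · obtain ⟨t', hm, hd₂⟩ := GF_proj G hd [Symbol.nonterminal D]
      (List.Forall₂.cons (Or.inr ⟨D, 𝒟, rfl, rfl, hD, hsub⟩) List.Forall₂.nil)
    obtain ⟨s1, γ1, hs1, hm2, rfl⟩ := List.forall₂_cons_right_iff.mp hm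
    obtain ⟨s2, γ2, hs2, _, rfl⟩ := List.forall₂_cons_right_iff.mp hm2
    obtain ⟨C, _, rfl, _, _, _⟩ := mr_nonterminal G hs1
    rw [mr_terminal G hs2] at hd₂
    exact ⟨γ2, Or.inr ⟨C, hd₂⟩⟩

/-- Right terminal sets transfer from `GF` to `G2`. -/
theorem rightT_GF {𝒟 : Set G.NT} {D : G.NT} (hD : D ∈ 𝒟) (hsub : 𝒟 ⊆ Occ G) {a : T}
    (h : a ∈ OP.rightTerminals (GF G) (some 𝒟)) : a ∈ OP.rightTerminals (G2 G) D := by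
  obtain ⟨α, hd | ⟨B', hd⟩⟩ := h
  · obtain ⟨t', hm, hd₂⟩ := GF_proj G hd [Symbol.nonterminal D]
      (List.Forall₂.cons (Or.inr ⟨D, 𝒟, rfl, rfl, hD, hsub⟩) List.Forall₂.nil)
    obtain ⟨t1, t2, rfl, _, hm2⟩ := forall₂_append_decomp hm
    obtain ⟨s, γ', hs, hnil, rfl⟩ := List.forall₂_cons_right_iff.mp hm2
    have : γ' = [] := List.forall₂_nil_right_iff.mp hnil
    subst this
    rw [mr_terminal G hs] at hd₂
    exact ⟨t1, Or.inl hd₂⟩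
  · obtain ⟨t', hm, hd₂⟩ := GF_proj G hd [Symbol.nonterminal D]
      (List.Forall₂.cons (Or.inr ⟨D, 𝒟, rfl, rfl, hD, hsub⟩) List.Forall₂.nil)
    obtain ⟨t1, t2, rfl, _, hm2⟩ := forall₂_append_decomp hm
    obtain ⟨s1, γ1, hs1, hm3, rfl⟩ := List.forall₂_cons_right_iff.mp hm2
    obtain ⟨s2, γ2, hs2, hnil, rfl⟩ := List.forall₂_cons_right_iff.mp hm3
    have : γ2 = [] := List.forall₂_nil_right_iff.mp hnil
    subst this
    obtain ⟨C, _, rfl, _, _, _⟩ := mr_nonterminal G hs2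
    rw [mr_terminal G hs1] at hd₂
    exact ⟨t1, Or.inr ⟨C, hd₂⟩⟩

/-- Left terminal sets transfer from `G2` to `G`. -/
theorem leftT_G2 {D : G.NT} {a : T} (h : a ∈ OP.leftTerminals (G2 G) D) :
    a ∈ OP.leftTerminals G D := by
  obtain ⟨α, hd | ⟨B', hd⟩⟩ := h
  · exact ⟨α, Or.inl (G2_sound G hd)⟩
  · exact ⟨α, Or.inr ⟨B', G2_sound G hd⟩⟩

/-- Right terminal sets transfer from `G2` to `G`. -/
theorem rightT_G2 {D : G.NT} {a : T} (h : a ∈ OP.rightTerminals (G2 G) D) :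
    a ∈ OP.rightTerminals G D := by
  obtain ⟨α, hd | ⟨B', hd⟩⟩ := h
  · exact ⟨α, Or.inl (G2_sound G hd)⟩
  · exact ⟨α, Or.inr ⟨B', G2_sound G hd⟩⟩
theorem no_adj_nts (hOG : OP.IsOperatorGrammar G) {r : ContextFreeRule T G.NT}
    (hr : r ∈ G.rules) {u v : List (Symbol T G.NT)} {E1 E2 : G.NT}
    (hout : r.output = u ++ Symbol.nonterminal E1 :: Symbol.nonterminal E2 :: v) : False := by
  have h := hOG r hr
  rw [hout] at h
  exact chain'_pattern u h E1 E2 ⟨rfl, rfl⟩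

theorem eqPrec_G2_to_G (hOG : OP.IsOperatorGrammar G) {a b : T}
    (h : OP.EqPrec (G2 G) a b) : OP.EqPrec G a b := by
  obtain ⟨r, hr, u, v, hout⟩ := h
  rw [mem_G2_rules] at hr
  obtain ⟨_, ⟨B', γ, _, hmG, hdelG⟩, _, _⟩ := hr
  rcases hout with hout | ⟨B, hout⟩
  · obtain ⟨u', d, v', hγ, hdnt, _⟩ := del_split G hdelG
      (show r.output = u ++ Symbol.terminal a :: Symbol.terminal b :: v by simpa using hout)
    match d, hdnt with
    | [], _ =>
      exact ⟨⟨B', γ⟩, hmG, u', v', Or.inl (by simpa using hγ)⟩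
    | [e], hdnt =>
      obtain ⟨E, rfl⟩ := hdnt e (by simp)
      exact ⟨⟨B', γ⟩, hmG, u', v', Or.inr ⟨E, by simpa using hγ⟩⟩
    | e1 :: e2 :: d', hdnt =>
      obtain ⟨E1, rfl⟩ := hdnt e1 (by simp)
      obtain ⟨E2, rfl⟩ := hdnt e2 (by simp)
      exact absurd (show γ = (u' ++ [Symbol.terminal a]) ++ Symbol.nonterminal E1 ::
        Symbol.nonterminal E2 :: (d' ++ Symbol.terminal b :: v') by rw [hγ]; simp)
        (fun hc => no_adj_nts G hOG hmG hc)
  · obtain ⟨u', d, v₁, hγ, hdnt, hdel₁⟩ := del_split G hdelG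
      (show r.output = u ++ Symbol.terminal a :: Symbol.nonterminal B ::
        (Symbol.terminal b :: v) by simpa using hout)
    match d, hdnt with
    | e :: d', hdnt =>
      obtain ⟨E, rfl⟩ := hdnt e (by simp)
      match d', hdnt with
      | [], _ =>
        exact absurd (show γ = (u' ++ [Symbol.terminal a]) ++ Symbol.nonterminal E ::
          Symbol.nonterminal B :: v₁ by rw [hγ]; simp)
          (fun hc => no_adj_nts G hOG hmG hc)
      | e2 :: d'', hdnt =>
        obtain ⟨E2, rfl⟩ := hdnt e2 (by simp)
        exact absurd (show γ = (u' ++ [Symbol.terminal a]) ++ Symbol.nonterminal E ::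
          Symbol.nonterminal E2 :: (d'' ++ Symbol.nonterminal B :: v₁) by rw [hγ]; simp)
          (fun hc => no_adj_nts G hOG hmG hc)
    | [], _ =>
      obtain ⟨d₂, v₂, hv₁, hdnt₂, _⟩ := del_head_extract G hdel₁ rfl
      match d₂, hdnt₂ with
      | [], _ =>
        exact ⟨⟨B', γ⟩, hmG, u', v₂, Or.inr ⟨B, by rw [hγ, hv₁]; simp⟩⟩
      | e₂ :: d₂', hdnt₂ =>
        obtain ⟨E₂, rfl⟩ := hdnt₂ e₂ (by simp)
        exact absurd (show γ = (u' ++ [Symbol.terminal a]) ++ Symbol.nonterminal B ::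
          Symbol.nonterminal E₂ :: (d₂' ++ Symbol.terminal b :: v₂) by rw [hγ, hv₁]; simp)
          (fun hc => no_adj_nts G hOG hmG hc)

theorem takesPrec_G2_to_G (hOG : OP.IsOperatorGrammar G) {a b : T}
    (h : OP.TakesPrec (G2 G) a b) : OP.TakesPrec G a b := by
  obtain ⟨r, hr, u, v, D, hout, hR⟩ := h
  rw [mem_G2_rules] at hr
  obtain ⟨_, ⟨B', γ, _, hmG, hdelG⟩, _, _⟩ := hr
  obtain ⟨u', d, v', hγ, hdnt, _⟩ := del_split G hdelG
    (show r.output = u ++ Symbol.nonterminal D :: Symbol.terminal b :: v by simpa using hout)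
  match d, hdnt with
  | [], _ =>
    exact ⟨⟨B', γ⟩, hmG, u', v', D, by simpa using hγ, rightT_G2 G hR⟩
  | e :: d', hdnt =>
    obtain ⟨E, rfl⟩ := hdnt e (by simp)
    exact absurd (show γ = u' ++ Symbol.nonterminal D :: Symbol.nonterminal E ::
      (d' ++ Symbol.terminal b :: v') by rw [hγ]; simp)
      (fun hc => no_adj_nts G hOG hmG hc)

theorem yieldsPrec_G2_to_G (hOG : OP.IsOperatorGrammar G) {a b : T}
    (h : OP.YieldsPrec (G2 G) a b) : OP.YieldsPrec G a b := by
  obtain ⟨r, hr, u, v, D, hout, hL⟩ := h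
  rw [mem_G2_rules] at hr
  obtain ⟨_, ⟨B', γ, _, hmG, hdelG⟩, _, _⟩ := hr
  obtain ⟨u', d, v', hγ, hdnt, _⟩ := del_split G hdelG
    (show r.output = u ++ Symbol.terminal a :: Symbol.nonterminal D :: v by simpa using hout)
  match d, hdnt with
  | [], _ =>
    exact ⟨⟨B', γ⟩, hmG, u', v', D, by simpa using hγ, leftT_G2 G hL⟩
  | e :: d', hdnt =>
    obtain ⟨E, rfl⟩ := hdnt e (by simp)
    match d', hdnt with
    | [], _ =>
      exact absurd (show γ = (u' ++ [Symbol.terminal a]) ++ Symbol.nonterminal E ::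
        Symbol.nonterminal D :: v' by rw [hγ]; simp)
        (fun hc => no_adj_nts G hOG hmG hc)
    | e2 :: d'', hdnt =>
      obtain ⟨E2, rfl⟩ := hdnt e2 (by simp)
      exact absurd (show γ = (u' ++ [Symbol.terminal a]) ++ Symbol.nonterminal E ::
        Symbol.nonterminal E2 :: (d'' ++ Symbol.nonterminal D :: v') by rw [hγ]; simp)
        (fun hc => no_adj_nts G hOG hmG hc)
theorem shapeSet_elim {δ : List (Symbol T (Option (Set G.NT)))} (hδ : δ ∈ ShapeSet G) :
    ∃ r₂ ∈ rules2Set G, Match G r₂.output δ := by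
  obtain ⟨r₂, hr₂, hm⟩ := Set.mem_iUnion₂.mp hδ
  exact ⟨r₂, hr₂, hm⟩

theorem shape_ne_nil {δ : List (Symbol T (Option (Set G.NT)))} (hδ : δ ∈ ShapeSet G) :
    δ ≠ [] := by
  obtain ⟨r₂, hr₂, hm⟩ := shapeSet_elim G hδ
  intro hc
  subst hc
  exact hr₂.2.2.1 (List.forall₂_nil_right_iff.mp hm)

theorem shape_ne_unit {δ : List (Symbol T (Option (Set G.NT)))} (hδ : δ ∈ ShapeSet G)
    (N : Option (Set G.NT)) : δ ≠ [Symbol.nonterminal N] := by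
  obtain ⟨r₂, hr₂, hm⟩ := shapeSet_elim G hδ
  intro hc
  subst hc
  obtain ⟨s, γ', hs, hnil, hout⟩ := List.forall₂_cons_right_iff.mp hm
  have hγ' : γ' = [] := List.forall₂_nil_right_iff.mp hnil
  obtain ⟨B, _, rfl, _, _, _⟩ := mr_nonterminal G hs
  exact hr₂.2.2.2 B (by rw [hout, hγ'])

theorem eqPrec_GF_to_G2 {a b : T} (h : OP.EqPrec (GF G) a b) : OP.EqPrec (G2 G) a b := by
  obtain ⟨r, hr, u, v, hout⟩ := h
  rw [mem_GF_rules] at hr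
  rcases hr with ⟨δ, hδ, rfl⟩ | ⟨𝒜, _, _, rfl⟩ | ⟨_, rfl⟩
  · obtain ⟨r₂, hr₂, hm⟩ := shapeSet_elim G hδ
    rcases hout with hout | ⟨B, hout⟩
    · obtain ⟨u', sx, sy, v', hγ, hx, hy⟩ := match_pattern G hm (by simpa using hout)
      rw [mr_terminal G hx, mr_terminal G hy] at hγ
      exact ⟨r₂, (mem_G2_rules G).mpr hr₂, u', v', Or.inl (by rw [hγ]; simp)⟩
    · obtain ⟨u', sx, sy, sz, v', hγ, hx, hy, hz⟩ := match_pattern3 G hm (by simpa using hout)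
      obtain ⟨C, _, rfl, _, _, _⟩ := mr_nonterminal G hy
      rw [mr_terminal G hx, mr_terminal G hz] at hγ
      exact ⟨r₂, (mem_G2_rules G).mpr hr₂, u', v', Or.inr ⟨C, by rw [hγ]; simp⟩⟩
  · rcases hout with hout | ⟨B, hout⟩ <;>
    · exfalso
      have := congrArg List.length hout
      simp at this
      omega
  · rcases hout with hout | ⟨B, hout⟩ <;>
    · exfalso
      have := congrArg List.length hout
      simp at this

theorem takesPrec_GF_to_G2 {a b : T} (h : OP.TakesPrec (GF G) a b) :
    OP.TakesPrec (G2 G) a b := by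
  obtain ⟨r, hr, u, v, D, hout, hR⟩ := h
  rw [mem_GF_rules] at hr
  rcases hr with ⟨δ, hδ, rfl⟩ | ⟨𝒜, _, _, rfl⟩ | ⟨_, rfl⟩
  · obtain ⟨r₂, hr₂, hm⟩ := shapeSet_elim G hδ
    obtain ⟨u', sx, sy, v', hγ, hx, hy⟩ := match_pattern G hm (by simpa using hout)
    obtain ⟨C, 𝒟, rfl, rfl, hC, hsub⟩ := mr_nonterminal G hx
    rw [mr_terminal G hy] at hγ
    exact ⟨r₂, (mem_G2_rules G).mpr hr₂, u', v', C, by rw [hγ]; simp,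
      rightT_GF G hC hsub hR⟩
  · exfalso
    have := congrArg List.length hout
    simp at this
    omega
  · exfalso
    have := congrArg List.length hout
    simp at this

theorem yieldsPrec_GF_to_G2 {a b : T} (h : OP.YieldsPrec (GF G) a b) :
    OP.YieldsPrec (G2 G) a b := by
  obtain ⟨r, hr, u, v, D, hout, hL⟩ := h
  rw [mem_GF_rules] at hr
  rcases hr with ⟨δ, hδ, rfl⟩ | ⟨𝒜, _, _, rfl⟩ | ⟨_, rfl⟩
  · obtain ⟨r₂, hr₂, hm⟩ := shapeSet_elim G hδ
    obtain ⟨u', sx, sy, v', hγ, hx, hy⟩ := match_pattern G hm (by simpa using hout)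
    obtain ⟨C, 𝒟, rfl, rfl, hC, hsub⟩ := mr_nonterminal G hy
    rw [mr_terminal G hx] at hγ
    exact ⟨r₂, (mem_G2_rules G).mpr hr₂, u', v', C, by rw [hγ]; simp,
      leftT_GF G hC hsub hL⟩
  · exfalso
    have := congrArg List.length hout
    simp at this
    omega
  · exfalso
    have := congrArg List.length hout
    simp at this

theorem G2_OG (hOG : OP.IsOperatorGrammar G) : OP.IsOperatorGrammar (G2 G) := by
  intro r hr
  rw [mem_G2_rules] at hr
  obtain ⟨_, ⟨B', γ, _, hmG, hdelG⟩, _, _⟩ := hr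
  apply chain'_of_pattern
  intro u s t v hout A B hAB
  obtain ⟨rfl, rfl⟩ := hAB
  obtain ⟨u', d, v', hγ, hdnt, _⟩ := del_split G hdelG hout
  match d, hdnt with
  | [], _ => exact no_adj_nts G hOG hmG (by simpa using hγ)
  | e :: d', hdnt =>
    obtain ⟨E, rfl⟩ := hdnt e (by simp)
    exact no_adj_nts G hOG hmG
      (show γ = u' ++ Symbol.nonterminal A :: Symbol.nonterminal E ::
        (d' ++ Symbol.nonterminal B :: v') by rw [hγ]; simp)

theorem GF_OG (hOG : OP.IsOperatorGrammar G) : OP.IsOperatorGrammar (GF G) := by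
  intro r hr
  rw [mem_GF_rules] at hr
  rcases hr with ⟨δ, hδ, rfl⟩ | ⟨𝒜, _, _, rfl⟩ | ⟨_, rfl⟩
  · obtain ⟨r₂, hr₂, hm⟩ := shapeSet_elim G hδ
    apply chain'_of_pattern
    intro u s t v hout A B hAB
    obtain ⟨rfl, rfl⟩ := hAB
    obtain ⟨u', sx, sy, v', hγ, hx, hy⟩ := match_pattern G hm hout
    obtain ⟨CA, _, rfl, _, _, _⟩ := mr_nonterminal G hx
    obtain ⟨CB, _, rfl, _, _, _⟩ := mr_nonterminal G hy
    have hchain := G2_OG G hOG r₂ ((mem_G2_rules G).mpr hr₂)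
    rw [hγ] at hchain
    exact chain'_pattern u' hchain CA CB ⟨rfl, rfl⟩
  · exact List.isChain_singleton _
  · exact List.isChain_nil

theorem GF_invertible : ∀ r₁ ∈ (GF G).rules, ∀ r₂ ∈ (GF G).rules,
    r₁.output = r₂.output → r₁ = r₂ := by
  intro r₁ hr₁ r₂ hr₂ hout
  rw [mem_GF_rules] at hr₁ hr₂
  rcases hr₁ with ⟨δ₁, hδ₁, rfl⟩ | ⟨𝒜₁, _, _, rfl⟩ | ⟨_, rfl⟩ <;>
    rcases hr₂ with ⟨δ₂, hδ₂, rfl⟩ | ⟨𝒜₂, _, _, rfl⟩ | ⟨_, rfl⟩ <;>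
    simp only at hout
  · subst hout; rfl
  · exact absurd hout (shape_ne_unit G hδ₁ _)
  · exact absurd hout (shape_ne_nil G hδ₁)
  · exact absurd hout.symm (shape_ne_unit G hδ₂ _)
  · rw [List.cons.injEq] at hout
    rw [Symbol.nonterminal.inj hout.1]
  · exact absurd hout (by simp)
  · exact absurd hout.symm (shape_ne_nil G hδ₂)
  · exact absurd hout (by simp)
  · rfl

theorem GF_no_empty : ∀ r ∈ (GF G).rules, r.output = [] → r.input = (GF G).initial := by
  intro r hr hout
  rw [mem_GF_rules] at hr
  rcases hr with ⟨δ, hδ, rfl⟩ | ⟨𝒜, _, _, rfl⟩ | ⟨_, rfl⟩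
  · exact absurd hout (shape_ne_nil G hδ)
  · exact absurd hout (by simp)
  · rfl

theorem GF_no_unit : ∀ r ∈ (GF G).rules, ∀ B : (GF G).NT,
    r.output = [Symbol.nonterminal B] → r.input = (GF G).initial := by
  intro r hr B hout
  rw [mem_GF_rules] at hr
  rcases hr with ⟨δ, hδ, rfl⟩ | ⟨𝒜, _, _, rfl⟩ | ⟨_, rfl⟩
  · exact absurd hout (shape_ne_unit G hδ B)
  · rfl
  · exact absurd hout (by simp)

theorem GF_conflictFree (hG : OP.IsOPG G) : OP.ConflictFree (OP.opm (GF G)) := by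
  intro a b
  refine (hG.2 a b).anti ?_
  intro p hp
  rcases hp with ⟨rfl, hY⟩ | ⟨rfl, hE⟩ | ⟨rfl, hT⟩
  · exact Or.inl ⟨rfl, yieldsPrec_G2_to_G G hG.1 (yieldsPrec_GF_to_G2 G hY)⟩
  · exact Or.inr (Or.inl ⟨rfl, eqPrec_G2_to_G G hG.1 (eqPrec_GF_to_G2 G hE)⟩)
  · exact Or.inr (Or.inr ⟨rfl, takesPrec_G2_to_G G hG.1 (takesPrec_GF_to_G2 G hT)⟩)

end OPProof

open OP in
/-- **Fischer normal form for operator precedence grammars.**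
For every operator precedence grammar `G` there exists an operator precedence grammar
`G'` with `L(G') = L(G)` in Fischer normal form: `G'` is invertible (no two productions
share the same right-hand side), has no empty rules except possibly `S → ε`, and no
renaming rules except possibly those whose left-hand side is the axiom `S`. -/
theorem fischer_normal_form {T : Type} (G : ContextFreeGrammar.{0} T) (hG : IsOPG G) :
    ∃ G' : ContextFreeGrammar.{0} T,
      IsOPG G' ∧
      G'.language = G.language ∧
      (∀ r₁ ∈ G'.rules, ∀ r₂ ∈ G'.rules, r₁.output = r₂.output → r₁ = r₂) ∧
      (∀ r ∈ G'.rules, r.output = [] → r.input = G'.initial) ∧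
      (∀ r ∈ G'.rules, ∀ B : G'.NT, r.output = [Symbol.nonterminal B] →
        r.input = G'.initial) := by
  exact ⟨OPProof.GF G, ⟨OPProof.GF_OG G hG.1, OPProof.GF_conflictFree G hG⟩,
    OPProof.GF_language G, OPProof.GF_invertible G, OPProof.GF_no_empty G,
    OPProof.GF_no_unit G⟩
end
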